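/- Let f be a C² non-flat contracting Lorenz map without periodic attractors. If f has a wandering interval, then the union 𝒲 of all open wandering intervals of f is an open and dense subset of [0,1]. -/

import Mathlib

open Set Filter Topology

noncomputable section

/-- The forward orbit of a point. -/
def posOrbit (f : ℝ → ℝ) (x : ℝ) : Set ℝ := {y | ∃ n : ℕ, f^[n] x = y}

/-- The pre-orbit of a point. -/
def preOrbit (f : ℝ → ℝ) (x : ℝ) : Set ℝ := {y | ∃ n : ℕ, f^[n] y = x}

/-- The ω-limit set of a point. -/
def omegaLim (f : ℝ → ℝ) (x : ℝ) : Set ℝ :=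
  {y | ∀ ε > 0, ∀ N : ℕ, ∃ n ≥ N, |f^[n] x - y| < ε}

/-- The α-limit set of a point: limits of sequences of preimages with times tending to ∞. -/
def alphaLim (f : ℝ → ℝ) (x : ℝ) : Set ℝ :=
  {y | ∀ ε > 0, ∀ N : ℕ, ∃ n ≥ N, ∃ z : ℝ, f^[n] z = x ∧ |z - y| < ε}

/-- The (full) basin of a set: points whose ω-limit is contained in it. -/
def omegaBasin (f : ℝ → ℝ) (A : Set ℝ) : Set ℝ := {x | omegaLim f x ⊆ A}

/-- The basin of a set, relative to `[0,1]`. -/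
def basin (f : ℝ → ℝ) (A : Set ℝ) : Set ℝ := {x | x ∈ Icc (0:ℝ) 1 ∧ omegaLim f x ⊆ A}

/-- Periodic point. -/
def IsPer (f : ℝ → ℝ) (p : ℝ) : Prop := ∃ n : ℕ, 1 ≤ n ∧ f^[n] p = p

/-- The domain of a Lorenz map with critical point `c`: `[0,1] \ {c}`. -/
def lorDom (c : ℝ) : Set ℝ := Icc (0:ℝ) 1 \ {c}

/-- The orbit of `x` never hits the critical point `c`. -/
def GoodOrbit (f : ℝ → ℝ) (c x : ℝ) : Prop := ∀ n : ℕ, f^[n] x ≠ c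

/-- A contracting Lorenz map on `[0,1]` with critical point `c`. -/
structure IsContractingLorenz (f : ℝ → ℝ) (c : ℝ) : Prop where
  c_mem : c ∈ Ioo (0:ℝ) 1
  map0 : f 0 = 0
  map1 : f 1 = 1
  maps : MapsTo f (lorDom c) (Icc 0 1)
  smooth : ContDiffOn ℝ 2 f (lorDom c)
  deriv_pos : ∀ x ∈ lorDom c, 0 < derivWithin f (lorDom c) x
  contracting : Tendsto (derivWithin f (lorDom c)) (𝓝[lorDom c] c) (𝓝 0)
  no_trivial_dynamics :
    ¬ ∃ (a b : ℝ) (n : ℕ), a < b ∧ 1 ≤ n ∧ ∀ x ∈ Ioo a b, f^[n] x = x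

/-- Non-flatness of a contracting Lorenz map at the critical point. -/
def IsNonFlat (f : ℝ → ℝ) (c : ℝ) : Prop :=
  ∃ (al be a b : ℝ) (φ₀ φ₁ : ℝ → ℝ),
    1 < al ∧ 1 < be ∧ a ∈ Icc (0:ℝ) 1 ∧ b ∈ Icc (0:ℝ) 1 ∧
    ContDiffOn ℝ 2 φ₀ (Icc 0 c) ∧ ContDiffOn ℝ 2 φ₁ (Icc c 1) ∧
    StrictMonoOn φ₀ (Icc 0 c) ∧ StrictMonoOn φ₁ (Icc c 1) ∧
    (∀ x ∈ Icc (0:ℝ) c, derivWithin φ₀ (Icc 0 c) x ≠ 0) ∧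
    (∀ x ∈ Icc c 1, derivWithin φ₁ (Icc c 1) x ≠ 0) ∧
    φ₀ '' Icc 0 c = Icc 0 (a ^ (1/al)) ∧
    φ₁ '' Icc c 1 = Icc 0 (b ^ (1/be)) ∧
    (∀ x ∈ Ico (0:ℝ) c, f x = a - φ₀ (c - x) ^ al) ∧
    (∀ x ∈ Ioc c 1, f x = 1 - b + φ₁ x ^ be)

/-- A periodic attractor: a finite set whose exact basin has nonempty interior. -/
def IsPeriodicAttractor (f : ℝ → ℝ) (Λ : Set ℝ) : Prop :=
  Λ.Finite ∧ Λ ⊆ Icc 0 1 ∧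
    (interior {x | x ∈ Icc (0:ℝ) 1 ∧ omegaLim f x = Λ}).Nonempty

def HasNoPeriodicAttractor (f : ℝ → ℝ) : Prop := ¬ ∃ Λ : Set ℝ, IsPeriodicAttractor f Λ

/-- An attracting periodic orbit. -/
def IsAttractingPeriodicOrbit (f : ℝ → ℝ) (p : ℝ) : Prop :=
  IsPer f p ∧ ∃ ε > 0,
    (Ioo p (p + ε) ⊆ omegaBasin f (posOrbit f p) ∨
     Ioo (p - ε) p ⊆ omegaBasin f (posOrbit f p))

/-- A wandering interval of a contracting Lorenz map with critical point `c`. -/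
def IsWanderingInterval (f : ℝ → ℝ) (c : ℝ) (I : Set ℝ) : Prop :=
  (∃ a b : ℝ, a < b ∧ I = Ioo a b) ∧ I ⊆ Icc 0 1 ∧
  (∀ (n : ℕ), ∀ x ∈ I, f^[n] x ≠ c) ∧
  (∀ i j : ℕ, 1 ≤ i → 1 ≤ j → i ≠ j → Disjoint (f^[i] '' I) (f^[j] '' I)) ∧
  (∀ p : ℝ, IsAttractingPeriodicOrbit f p → Disjoint I (omegaBasin f (posOrbit f p)))

/-- `(a,b)` is a renormalization interval of the Lorenz map `f` with critical point `c`. -/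
def IsRenormInterval (f : ℝ → ℝ) (c a b : ℝ) : Prop :=
  0 ≤ a ∧ a < c ∧ c < b ∧ b ≤ 1 ∧ IsPer f a ∧ IsPer f b ∧
  f^[Function.minimalPeriod f a] '' Ico a c ⊆ Icc a b ∧
  f^[Function.minimalPeriod f b] '' Ioc c b ⊆ Icc a b

/-- The complement (within `[0,1]`) of the set `Λ_J` of points never visiting `J = (a,b)`. -/
def gapSet (f : ℝ → ℝ) (a b : ℝ) : Set ℝ :=
  {x | x ∈ Icc (0:ℝ) 1 ∧ ∃ n : ℕ, f^[n] x ∈ Ioo a b}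

/-- The nice trapping region `K_J` associated to the renormalization interval `J = (a,b)`:
the union of the gaps of `Λ_J` containing an interval of the renormalization cycle. -/
def niceTrapping (f : ℝ → ℝ) (c a b : ℝ) : Set ℝ :=
  {x | x ∈ gapSet f a b ∧
    ((∃ i ≤ Function.minimalPeriod f a,
        f^[i] '' Ioo a c ⊆ connectedComponentIn (gapSet f a b) x) ∨
     (∃ i ≤ Function.minimalPeriod f b,
        f^[i] '' Ioo c b ⊆ connectedComponentIn (gapSet f a b) x))}

/-- `f` is ∞-renormalizable: it has infinitely many distinct renormalization intervals. -/
def InfinitelyRenormalizable (f : ℝ → ℝ) (c : ℝ) : Prop :=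
  {J : ℝ × ℝ | IsRenormInterval f c J.1 J.2}.Infinite

/-- `S` is residual in `U`: it contains the intersection with `U` of countably many
open sets, each dense in `U`. -/
def ResidualIn (S U : Set ℝ) : Prop :=
  ∃ g : ℕ → Set ℝ, (∀ n, IsOpen (g n) ∧ U ⊆ closure (g n)) ∧ U ∩ ⋂ n, g n ⊆ S

/-- `S` contains a relatively open and dense subset of `[0,1]`, namely `S ∩ [0,1]` itself
is relatively open and dense in `[0,1]`. -/
def OpenDenseIn01 (S : Set ℝ) : Prop :=
  (∃ U : Set ℝ, IsOpen U ∧ U ∩ Icc (0:ℝ) 1 = S ∩ Icc (0:ℝ) 1) ∧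
  Icc (0:ℝ) 1 ⊆ closure (S ∩ Icc (0:ℝ) 1)

/-- Milnor topological attractor (relative to `[0,1]`). -/
def IsTopologicalAttractor (f : ℝ → ℝ) (A : Set ℝ) : Prop :=
  IsCompact A ∧
  (∃ U : Set ℝ, IsOpen U ∧ U.Nonempty ∧ ResidualIn (basin f A) U) ∧
  ∀ A' : Set ℝ, IsClosed A' → A' ⊂ A → MapsTo f A' A' →
    ∃ U : Set ℝ, IsOpen U ∧ U.Nonempty ∧ ResidualIn (basin f A \ basin f A') U

/-- A super-attractor. -/
def IsSuperAttractor (f : ℝ → ℝ) (c : ℝ) (Λ : Set ℝ) : Prop :=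
  ∃ (n : ℕ) (p : ℕ → ℝ), 1 ≤ n ∧
    Λ = insert c (p '' {i : ℕ | 1 ≤ i ∧ i ≤ n}) ∧
    (∀ i, 1 ≤ i → i < n → f (p i) = p (i + 1)) ∧
    f (p n) = c ∧
    (Tendsto f (𝓝[>] c) (𝓝 (p 1)) ∨ Tendsto f (𝓝[<] c) (𝓝 (p 1)))

/-- A Cherry map: no super-attractor, and the critical point is in the ω-limit set of
every point of some neighborhood of the critical point. -/
def IsCherryMap (f : ℝ → ℝ) (c : ℝ) : Prop :=
  (¬ ∃ Λ : Set ℝ, IsSuperAttractor f c Λ) ∧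
  ∃ δ > 0, ∀ x ∈ Ioo (c - δ) (c + δ), GoodOrbit f c x → c ∈ omegaLim f x

/-- A Cherry attractor: `f` is a Cherry map and `Λ` is the common ω-limit set of
the two lateral critical values. -/
def IsCherryAttractor (f : ℝ → ℝ) (c : ℝ) (Λ : Set ℝ) : Prop :=
  IsCherryMap f c ∧ ∃ vm vp : ℝ,
    Tendsto f (𝓝[<] c) (𝓝 vm) ∧ Tendsto f (𝓝[>] c) (𝓝 vp) ∧
    Λ = omegaLim f vm ∧ Λ = omegaLim f vp

/-- A solenoidal attractor: contained in the intersection of the nice trapping regions of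
an infinite nested chain of renormalization intervals. -/
def IsSolenoidalAttractor (f : ℝ → ℝ) (c : ℝ) (Λ : Set ℝ) : Prop :=
  ∃ a b : ℕ → ℝ,
    (∀ n, IsRenormInterval f c (a n) (b n)) ∧
    (∀ n, Ioo (a (n+1)) (b (n+1)) ⊂ Ioo (a n) (b n)) ∧
    Λ ⊆ ⋂ n, niceTrapping f c (a n) (b n)

/-- Lower Lyapunov exponent along the orbit of `x`. -/
def lyapExp (f : ℝ → ℝ) (c x : ℝ) : ℝ :=
  Filter.liminf (fun n : ℕ =>
    Real.log (∏ i ∈ Finset.range n, |derivWithin f (lorDom c) (f^[i] x)|) / n)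
    Filter.atTop

/-- A chaotic set: transitive, dense periodic points, positive topological entropy,
and a dense set of points with Lyapunov exponent bounded below by a positive constant. -/
def IsChaotic (f : ℝ → ℝ) (c : ℝ) (Λ : Set ℝ) : Prop :=
  (∃ x ∈ Λ, omegaLim f x = Λ) ∧
  Λ ⊆ closure {p | p ∈ Λ ∧ IsPer f p} ∧
  0 < Dynamics.coverEntropy f Λ ∧
  ∃ lam : ℝ, 0 < lam ∧ Λ ⊆ closure {x | x ∈ Λ ∧ lam < lyapExp f c x}

/-- A cycle of intervals: a transitive finite union of nontrivial pairwise disjoint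
closed intervals. -/
def IsCycleOfIntervals (f : ℝ → ℝ) (Λ : Set ℝ) : Prop :=
  (∃ x ∈ Λ, omegaLim f x = Λ) ∧
  ∃ (N : ℕ) (a b : Fin N → ℝ), 0 < N ∧ (∀ i, a i < b i) ∧
    (∀ i j, i ≠ j → Disjoint (Icc (a i) (b i)) (Icc (a j) (b j))) ∧
    Λ = ⋃ i, Icc (a i) (b i)

/-- A Cantor set in `ℝ`. -/
def IsCantorSet (S : Set ℝ) : Prop :=
  IsCompact S ∧ Perfect S ∧ IsTotallyDisconnected S

/-- A non-wandering point (relative to `[0,1]`). -/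
def IsNonWandering (f : ℝ → ℝ) (y : ℝ) : Prop :=
  ∀ U : Set ℝ, IsOpen U → y ∈ U →
    ∃ n : ℕ, 1 ≤ n ∧ (f^[n] '' (U ∩ Icc 0 1) ∩ U).Nonempty

/-- A nice interval `(a,b) ∋ c`. -/
def IsNiceInterval (f : ℝ → ℝ) (c a b : ℝ) : Prop :=
  0 ≤ a ∧ a < c ∧ c < b ∧ b ≤ 1 ∧
  (∀ n : ℕ, 1 ≤ n → f^[n] a ∉ Ioo a b) ∧
  (∀ n : ℕ, 1 ≤ n → f^[n] b ∉ Ioo a b) ∧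
  (∀ p : ℝ, IsAttractingPeriodicOrbit f p →
    (a ∈ omegaBasin f (posOrbit f p) → a ∈ posOrbit f p) ∧
    (b ∈ omegaBasin f (posOrbit f p) → b ∈ posOrbit f p))

/-- Negative Schwarzian derivative on `[0,1] \ {c}`. -/
def HasNegSchwarzian (f : ℝ → ℝ) (c : ℝ) : Prop :=
  ∀ x ∈ lorDom c, derivWithin f (lorDom c) x ≠ 0 →
    iteratedDerivWithin 3 f (lorDom c) x / derivWithin f (lorDom c) x -
      (3/2) * (iteratedDerivWithin 2 f (lorDom c) x / derivWithin f (lorDom c) x) ^ 2 < 0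

/-- `ω_f(x) = Λ` on a relatively open and dense subset of `[0,1]`. -/
def OmegaEqOnOpenDense (f : ℝ → ℝ) (c : ℝ) (Λ : Set ℝ) : Prop :=
  ∃ U : Set ℝ, IsOpen U ∧ Icc (0:ℝ) 1 ⊆ closure (U ∩ Icc (0:ℝ) 1) ∧
    ∀ x ∈ U ∩ Icc (0:ℝ) 1, GoodOrbit f c x → omegaLim f x = Λ

/-- `ω_f(x) = Λ` on a residual subset of `[0,1]`. -/
def OmegaEqOnResidual (f : ℝ → ℝ) (c : ℝ) (Λ : Set ℝ) : Prop :=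
  ResidualIn {x | GoodOrbit f c x → omegaLim f x = Λ} (Icc (0:ℝ) 1)

end


section Lemmas
namespace WDense

variable {f : ℝ → ℝ} {c : ℝ}

lemma Ico_subset_lorDom (hc : c ∈ Ioo (0:ℝ) 1) : Ico (0:ℝ) c ⊆ lorDom c := by
  rintro x ⟨h0, h1⟩
  exact ⟨⟨h0, le_of_lt (lt_of_lt_of_le h1 hc.2.le)⟩, ne_of_lt h1⟩

lemma Ioc_subset_lorDom (hc : c ∈ Ioo (0:ℝ) 1) : Ioc c 1 ⊆ lorDom c := by
  rintro x ⟨h0, h1⟩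
  exact ⟨⟨le_of_lt (lt_of_le_of_lt hc.1.le h0), h1⟩, (ne_of_gt h0)⟩

lemma lorDom_mem_nhds (hc : c ∈ Ioo (0:ℝ) 1) {x : ℝ} (hx0 : 0 < x) (hx1 : x < 1)
    (hxc : x ≠ c) : lorDom c ∈ 𝓝 x := by
  have h : Ioo (0:ℝ) 1 ∩ {c}ᶜ ∈ 𝓝 x :=
    IsOpen.mem_nhds ((isOpen_Ioo).inter isOpen_compl_singleton) ⟨⟨hx0, hx1⟩, hxc⟩
  exact mem_of_superset h (fun y hy => ⟨Ioo_subset_Icc_self hy.1, hy.2⟩)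

lemma strictMonoOn_left (hf : IsContractingLorenz f c) : StrictMonoOn f (Ico 0 c) := by
  apply strictMonoOn_of_deriv_pos (convex_Ico _ _)
    (hf.smooth.continuousOn.mono (Ico_subset_lorDom hf.c_mem))
  intro x hx
  rw [interior_Ico] at hx
  have hd : lorDom c ∈ 𝓝 x :=
    lorDom_mem_nhds hf.c_mem hx.1 (lt_trans hx.2 hf.c_mem.2) (ne_of_lt hx.2)
  rw [← derivWithin_of_mem_nhds hd]
  exact hf.deriv_pos x (mem_of_mem_nhds hd)

lemma strictMonoOn_right (hf : IsContractingLorenz f c) : StrictMonoOn f (Ioc c 1) := by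
  apply strictMonoOn_of_deriv_pos (convex_Ioc _ _)
    (hf.smooth.continuousOn.mono (Ioc_subset_lorDom hf.c_mem))
  intro x hx
  rw [interior_Ioc] at hx
  have hd : lorDom c ∈ 𝓝 x :=
    lorDom_mem_nhds hf.c_mem (lt_trans hf.c_mem.1 hx.1) hx.2 (ne_of_gt hx.1)
  rw [← derivWithin_of_mem_nhds hd]
  exact hf.deriv_pos x (mem_of_mem_nhds hd)

lemma subset_side {A : Set ℝ} (hA : A ⊆ Icc 0 1) (hconn : A.OrdConnected)
    (hcn : ∀ x ∈ A, x ≠ c) : A ⊆ Ico 0 c ∨ A ⊆ Ioc c 1 := by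
  by_cases h : ∃ x ∈ A, x < c
  · left
    intro y hy
    rcases lt_or_ge y c with h' | h'
    · exact ⟨(hA hy).1, h'⟩
    · obtain ⟨x, hx, hxc⟩ := h
      have hcy : c < y := lt_of_le_of_ne h' (Ne.symm (hcn y hy))
      exact absurd (hconn.out hx hy ⟨hxc.le, hcy.le⟩) (by simpa using hcn c)
  · right
    push_neg at h
    intro y hy
    exact ⟨lt_of_le_of_ne (h y hy) (Ne.symm (hcn y hy)), (hA hy).2⟩

lemma side_mono_cont (hf : IsContractingLorenz f c) {A : Set ℝ} (hA : A ⊆ Icc 0 1)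
    (hconn : A.OrdConnected) (hcn : ∀ x ∈ A, x ≠ c) :
    StrictMonoOn f A ∧ ContinuousOn f A ∧ A ⊆ lorDom c := by
  rcases subset_side hA hconn hcn with h | h
  · exact ⟨(strictMonoOn_left hf).mono h, (hf.smooth.continuousOn.mono
      ((Ico_subset_lorDom hf.c_mem))).mono h, h.trans (Ico_subset_lorDom hf.c_mem)⟩
  · exact ⟨(strictMonoOn_right hf).mono h, (hf.smooth.continuousOn.mono
      ((Ioc_subset_lorDom hf.c_mem))).mono h, h.trans (Ioc_subset_lorDom hf.c_mem)⟩

/-- Basic block lemma: on an order-connected set whose first `n-1` iterates avoid `c`,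
the `n`-th iterate is strictly monotone, continuous, image in `[0,1]` and order-connected. -/
lemma block (hf : IsContractingLorenz f c) (n : ℕ) {A : Set ℝ} (hA : A ⊆ Icc 0 1)
    (hconn : A.OrdConnected) (hcl : ∀ x ∈ A, ∀ i < n, f^[i] x ≠ c) :
    StrictMonoOn f^[n] A ∧ ContinuousOn f^[n] A ∧ f^[n] '' A ⊆ Icc 0 1 ∧
      (f^[n] '' A).OrdConnected := by
  induction n with
  | zero =>
    simp only [Function.iterate_zero, image_id]
    exact ⟨fun x _ y _ h => h, continuousOn_id, hA, hconn⟩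
  | succ n ih =>
    obtain ⟨hm, hcont, hsub, hoc⟩ := ih (fun x hx i hi => hcl x hx i (hi.trans (Nat.lt_succ_self n)))
    have hcn : ∀ y ∈ f^[n] '' A, y ≠ c := by
      rintro y ⟨x, hx, rfl⟩
      exact hcl x hx n (Nat.lt_succ_self n)
    obtain ⟨hm2, hcont2, hsub2⟩ := side_mono_cont hf hsub hoc hcn
    have hiter : f^[n+1] = f ∘ f^[n] := Function.iterate_succ' f n
    refine ⟨?_, ?_, ?_, ?_⟩
    · intro x hx y hy hxy
      rw [hiter]
      exact hm2 (mem_image_of_mem _ hx) (mem_image_of_mem _ hy) (hm hx hy hxy)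
    · rw [hiter]
      exact hcont2.comp hcont (mapsTo_image f^[n] A)
    · rw [hiter, image_comp]
      exact fun y ⟨x, hx, h⟩ => h ▸ hf.maps (hsub2 hx)
    · rw [hiter, image_comp]
      exact IsPreconnected.ordConnected (hoc.isPreconnected.image f hcont2)

lemma block_open (hf : IsContractingLorenz f c) (n : ℕ) {A : Set ℝ} (hA : A ⊆ Icc 0 1)
    (hconn : A.OrdConnected) (hopen : IsOpen A) (hcl : ∀ x ∈ A, ∀ i < n, f^[i] x ≠ c) :
    IsOpen (f^[n] '' A) := by
  obtain ⟨hm, hcont, hsub, hoc⟩ := block hf n hA hconn hcl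
  rw [isOpen_iff_mem_nhds]
  rintro y ⟨x, hx, rfl⟩
  obtain ⟨ε, hε, hball⟩ := Metric.isOpen_iff.mp hopen x hx
  have hx1 : x - ε/2 ∈ A := hball (by
    rw [Metric.mem_ball, Real.dist_eq]
    rw [abs_of_neg (by linarith : x - ε/2 - x < 0)]; linarith)
  have hx2 : x + ε/2 ∈ A := hball (by
    rw [Metric.mem_ball, Real.dist_eq]
    rw [abs_of_pos (by linarith : (0:ℝ) < x + ε/2 - x)]; linarith)
  have hlt1 : f^[n] (x - ε/2) < f^[n] x := hm hx1 hx (by linarith)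
  have hlt2 : f^[n] x < f^[n] (x + ε/2) := hm hx hx2 (by linarith)
  have hIcc : Icc (x - ε/2) (x + ε/2) ⊆ A := hconn.out hx1 hx2
  have hIV : Icc (f^[n] (x - ε/2)) (f^[n] (x + ε/2)) ⊆ f^[n] '' A := by
    refine (intermediate_value_Icc (by linarith) (hcont.mono hIcc)).trans ?_
    exact image_mono hIcc
  exact mem_of_superset (IsOpen.mem_nhds isOpen_Ioo ⟨hlt1, hlt2⟩)
    ((Ioo_subset_Icc_self).trans hIV)

lemma eq_Ioo_of_open {A : Set ℝ} (hopen : IsOpen A) (hconn : A.OrdConnected) (hne : A.Nonempty)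
    (hsub : A ⊆ Icc (0:ℝ) 1) : ∃ a b : ℝ, a < b ∧ A = Ioo a b := by
  have hbdd : BddAbove A := ⟨1, fun x hx => (hsub hx).2⟩
  have hbdd' : BddBelow A := ⟨0, fun x hx => (hsub hx).1⟩
  have key : ∀ x ∈ A, sInf A < x ∧ x < sSup A := by
    intro x hx
    obtain ⟨ε, hε, hball⟩ := Metric.isOpen_iff.mp hopen x hx
    have h1 : x - ε/2 ∈ A := hball (by
      rw [Metric.mem_ball, Real.dist_eq]
      rw [abs_of_neg (by linarith : x - ε/2 - x < 0)]; linarith)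
    have h2 : x + ε/2 ∈ A := hball (by
      rw [Metric.mem_ball, Real.dist_eq]
      rw [abs_of_pos (by linarith : (0:ℝ) < x + ε/2 - x)]; linarith)
    exact ⟨lt_of_le_of_lt (csInf_le hbdd' h1) (by linarith),
      lt_of_lt_of_le (by linarith : x < x + ε/2) (le_csSup hbdd h2)⟩
  obtain ⟨x₀, hx₀⟩ := id hne
  refine ⟨sInf A, sSup A, lt_trans (key x₀ hx₀).1 (key x₀ hx₀).2, ?_⟩
  ext y
  constructor
  · intro hy; exact ⟨(key y hy).1, (key y hy).2⟩
  · rintro ⟨hy1, hy2⟩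
    obtain ⟨a', ha', ha'y⟩ := exists_lt_of_csInf_lt hne hy1
    obtain ⟨b', hb', hyb'⟩ := exists_lt_of_lt_csSup hne hy2
    exact hconn.out ha' hb' ⟨ha'y.le, hyb'.le⟩

lemma iter_mem_Icc (hf : IsContractingLorenz f c) {x : ℝ} {n : ℕ} (hx : x ∈ Icc (0:ℝ) 1)
    (h : ∀ i < n, f^[i] x ≠ c) : ∀ i ≤ n, f^[i] x ∈ Icc (0:ℝ) 1 := by
  intro i
  induction i with
  | zero => intro _; simpa using hx
  | succ k ih =>
    intro hk
    rw [Function.iterate_succ_apply']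
    exact hf.maps ⟨ih (by omega), h k (by omega)⟩

lemma good_iter_mem_Icc (hf : IsContractingLorenz f c) {x : ℝ} (hx : x ∈ Icc (0:ℝ) 1)
    (hg : GoodOrbit f c x) (n : ℕ) : f^[n] x ∈ Icc (0:ℝ) 1 :=
  iter_mem_Icc hf hx (fun i _ => hg i) n le_rfl

lemma good_shift {x : ℝ} (hg : GoodOrbit f c x) (m : ℕ) : GoodOrbit f c (f^[m] x) := by
  intro n
  rw [← Function.iterate_add_apply]
  exact hg (n + m)

lemma omega_shift (f : ℝ → ℝ) (x : ℝ) (m : ℕ) : omegaLim f (f^[m] x) = omegaLim f x := by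
  ext y
  constructor
  · intro hy ε hε N
    obtain ⟨n, hn, h⟩ := hy ε hε N
    exact ⟨n + m, le_trans hn (Nat.le_add_right n m),
      by rwa [← Function.iterate_add_apply] at h⟩
  · intro hy ε hε N
    obtain ⟨n, hn, h⟩ := hy ε hε (N + m)
    refine ⟨n - m, by omega, ?_⟩
    rw [← Function.iterate_add_apply, Nat.sub_add_cancel (by omega)]
    exact h

lemma omega_subset_Icc (hf : IsContractingLorenz f c) {x : ℝ} (hx : x ∈ Icc (0:ℝ) 1)
    (hg : GoodOrbit f c x) : omegaLim f x ⊆ Icc (0:ℝ) 1 := by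
  intro y hy
  have hcl : y ∈ closure (Icc (0:ℝ) 1) := by
    rw [Metric.mem_closure_iff]
    intro ε hε
    obtain ⟨n, _, h⟩ := hy ε hε 0
    exact ⟨f^[n] x, good_iter_mem_Icc hf hx hg n, by rw [Real.dist_eq, abs_sub_comm]; exact h⟩
  rwa [isClosed_Icc.closure_eq] at hcl

lemma posOrbit_finite {p : ℝ} (hp : IsPer f p) : (posOrbit f p).Finite := by
  obtain ⟨m, hm1, hm⟩ := hp
  have hper : ∀ q : ℕ, f^[m * q] p = p := by
    intro q
    induction q with
    | zero => simp
    | succ q ih => rw [Nat.mul_succ, Function.iterate_add_apply, hm, ih]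
  have hsub : posOrbit f p ⊆ (fun i => f^[i] p) '' (Iio m) := by
    rintro y ⟨n, rfl⟩
    refine ⟨n % m, Nat.mod_lt n (by omega), ?_⟩
    have h2 : f^[n] p = f^[n % m] (f^[m * (n / m)] p) := by
      rw [← Function.iterate_add_apply, Nat.add_comm, Nat.div_add_mod]
    rw [h2, hper]
  exact Set.Finite.subset ((Set.finite_Iio m).image _) hsub

lemma wand_good {I : Set ℝ} (hI : IsWanderingInterval f c I) {x : ℝ} (hx : x ∈ I) :
    GoodOrbit f c x := fun n => hI.2.2.1 n x hx

lemma wand_self_disjoint {I : Set ℝ} (hI : IsWanderingInterval f c I) {k : ℕ} (hk : 1 ≤ k) :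
    ∀ x ∈ I, ∀ y ∈ I, f^[k] y ≠ x := by
  intro x hx y hy hxy
  have hd := hI.2.2.2.1 1 (k+1) le_rfl (by omega) (by omega)
  have h1 : f^[1] x ∈ f^[1] '' I := mem_image_of_mem _ hx
  have h2 : f^[1] x ∈ f^[k+1] '' I := by
    refine ⟨y, hy, ?_⟩
    rw [show k + 1 = 1 + k by omega, Function.iterate_add_apply, hxy]
  exact Set.disjoint_left.mp hd h1 h2

lemma pullback {I J : Set ℝ} (hI : IsWanderingInterval f c I)
    {a b : ℝ} (hab : a < b) (hJ : J = Ioo a b) (hJI : J ⊆ Icc 0 1) (n : ℕ)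
    (hclean : ∀ x ∈ J, ∀ i < n, f^[i] x ≠ c) (himg : ∀ x ∈ J, f^[n] x ∈ I) :
    IsWanderingInterval f c J := by
  refine ⟨⟨a, b, hab, hJ⟩, hJI, ?_, ?_, ?_⟩
  · intro m x hx
    rcases lt_or_ge m n with h | h
    · exact hclean x hx m h
    · have h2 : f^[m] x = f^[m - n] (f^[n] x) := by
        rw [← Function.iterate_add_apply, Nat.sub_add_cancel h]
      rw [h2]
      exact wand_good hI (himg x hx) (m - n)
  · intro i j hi hj hij
    wlog hlt : i < j generalizing i j
    · exact (this j i hj hi hij.symm (by omega)).symm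
    rw [Set.disjoint_left]
    rintro z ⟨u, hu, rfl⟩ ⟨v, hv, hzv⟩
    rcases le_or_gt n i with hni | hni
    · -- n ≤ i < j
      have hui : f^[i] u = f^[i-n] (f^[n] u) := by
        rw [← Function.iterate_add_apply, Nat.sub_add_cancel hni]
      have hvj : f^[j] v = f^[j-n] (f^[n] v) := by
        rw [← Function.iterate_add_apply, Nat.sub_add_cancel (le_trans hni hlt.le)]
      rcases Nat.eq_or_lt_of_le hni with heq | hlt2
      · -- i = n : z = f^[n] u ∈ I
        have hzI : f^[i] u ∈ I := by rw [← heq]; exact himg u hu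
        refine wand_self_disjoint hI (k := j - n) (by omega) (f^[i] u) hzI
          (f^[n] v) (himg v hv) ?_
        rw [← hvj, hzv]
      · have hd := hI.2.2.2.1 (i-n) (j-n) (by omega) (by omega) (by omega)
        exact Set.disjoint_left.mp hd ⟨f^[n] u, himg u hu, hui.symm⟩
          ⟨f^[n] v, himg v hv, by rw [← hvj, hzv]⟩
    · rcases le_or_gt n j with hnj | hnj
      · -- i < n ≤ j
        have h1 : f^[n-i] (f^[i] u) = f^[n] u := by
          rw [← Function.iterate_add_apply, Nat.sub_add_cancel hni.le]
        have h2 : f^[n-i] (f^[j] v) = f^[j-i] (f^[n] v) := by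
          rw [← Function.iterate_add_apply, ← Function.iterate_add_apply]
          congr 1
          omega
        refine wand_self_disjoint hI (k := j - i) (by omega) (f^[n] u) (himg u hu)
          (f^[n] v) (himg v hv) ?_
        rw [← h2, hzv]
        exact h1
      · -- i < j < n : u enters I at time n-j+i as well as at n
        have h1 : f^[n-j] (f^[j] v) = f^[n] v := by
          rw [← Function.iterate_add_apply, Nat.sub_add_cancel hnj.le]
        have h2 : f^[n-j+i] u = f^[n] v := by
          rw [Function.iterate_add_apply, ← hzv, h1]
        have h3 : f^[n] u = f^[j-i] (f^[n-j+i] u) := by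
          rw [← Function.iterate_add_apply]
          congr 1
          omega
        refine wand_self_disjoint hI (k := j - i) (by omega) (f^[n] u) (himg u hu)
          (f^[n-j+i] u) ?_ ?_
        · rw [h2]; exact himg v hv
        · exact h3.symm
  · intro p hp
    rw [Set.disjoint_left]
    intro x hx hxb
    have hb2 : f^[n] x ∈ omegaBasin f (posOrbit f p) := by
      have : omegaLim f (f^[n] x) = omegaLim f x := omega_shift f x n
      simpa [omegaBasin, this] using hxb
    exact Set.disjoint_left.mp (hI.2.2.2.2 p hp) (himg x hx) hb2

lemma pushforward (hf : IsContractingLorenz f c) {I : Set ℝ} (hI : IsWanderingInterval f c I)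
    (n : ℕ) : IsWanderingInterval f c (f^[n] '' I) := by
  obtain ⟨⟨a, b, hab, hIoo⟩, hsub, hgood, hdisj, hbas⟩ := hI
  have hIconn : I.OrdConnected := by rw [hIoo]; exact ordConnected_Ioo
  have hclean : ∀ x ∈ I, ∀ i < n, f^[i] x ≠ c := fun x hx i _ => hgood i x hx
  have hne : I.Nonempty := by rw [hIoo]; exact nonempty_Ioo.mpr hab
  have hopen : IsOpen I := by rw [hIoo]; exact isOpen_Ioo
  obtain ⟨hm, hcont, hsub2, hoc⟩ := block hf n hsub hIconn hclean
  have hop2 : IsOpen (f^[n] '' I) := block_open hf n hsub hIconn hopen hclean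
  obtain ⟨a', b', hab', hIoo'⟩ := eq_Ioo_of_open hop2 hoc (hne.image _) hsub2
  have himg : ∀ m, f^[m] '' (f^[n] '' I) = f^[m+n] '' I := by
    intro m
    rw [← image_comp, ← Function.iterate_add]
  refine ⟨⟨a', b', hab', hIoo'⟩, hsub2, ?_, ?_, ?_⟩
  · rintro m x ⟨u, hu, rfl⟩
    rw [← Function.iterate_add_apply]
    exact hgood (m+n) u hu
  · intro i j hi hj hij
    rw [himg, himg]
    exact hdisj (i+n) (j+n) (by omega) (by omega) (by omega)
  · intro p hp
    rw [Set.disjoint_left]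
    rintro x ⟨u, hu, rfl⟩ hxb
    have hb2 : u ∈ omegaBasin f (posOrbit f p) := by
      have : omegaLim f (f^[n] u) = omegaLim f u := omega_shift f u n
      simpa [omegaBasin, ← this] using hxb
    exact Set.disjoint_left.mp (hbas p hp) hu hb2

lemma sum_lengths_le {T : ℕ → Set ℝ} {a b : ℕ → ℝ} (hT : ∀ i, 1 ≤ i → T i = Ioo (a i) (b i))
    (hab : ∀ i, 1 ≤ i → a i < b i)
    (hsub : ∀ i, 1 ≤ i → T i ⊆ Icc (0:ℝ) 1)
    (hdisj : ∀ i j, 1 ≤ i → 1 ≤ j → i ≠ j → Disjoint (T i) (T j)) (N : ℕ) :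
    ∑ i ∈ Finset.Ico 1 N, (b i - a i) ≤ 1 := by
  classical
  have hmeas : ∀ i ∈ Finset.Ico 1 N, MeasurableSet (T i) := by
    intro i hi
    rw [hT i (Finset.mem_Ico.mp hi).1]
    exact measurableSet_Ioo
  have hpd : (↑(Finset.Ico 1 N) : Set ℕ).PairwiseDisjoint T := by
    intro i hi j hj hij
    exact hdisj i j (Finset.mem_Ico.mp hi).1 (Finset.mem_Ico.mp hj).1 hij
  have h1 := MeasureTheory.measure_biUnion_finset (μ := MeasureTheory.volume) hpd hmeas
  have h2 : MeasureTheory.volume (⋃ i ∈ Finset.Ico 1 N, T i) ≤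
      MeasureTheory.volume (Icc (0:ℝ) 1) := by
    apply MeasureTheory.measure_mono
    intro x hx
    simp only [mem_iUnion] at hx
    obtain ⟨i, hi, hxi⟩ := hx
    exact hsub i (Finset.mem_Ico.mp hi).1 hxi
  rw [h1] at h2
  have h3 : ∀ i ∈ Finset.Ico 1 N, MeasureTheory.volume (T i) =
      ENNReal.ofReal (b i - a i) := by
    intro i hi
    rw [hT i (Finset.mem_Ico.mp hi).1, Real.volume_Ioo]
  rw [Finset.sum_congr rfl h3] at h2
  have h4 : ∀ i ∈ Finset.Ico 1 N, (0:ℝ) ≤ b i - a i := by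
    intro i hi
    have := hab i (Finset.mem_Ico.mp hi).1
    linarith
  rw [← ENNReal.ofReal_sum_of_nonneg h4, Real.volume_Icc] at h2
  rw [ENNReal.ofReal_le_ofReal_iff (by norm_num)] at h2
  linarith

/-- On an interval with pairwise-disjoint forward images, the lengths of the images tend to 0;
hence all points of the interval have the same ω-limit set. If moreover some point has a finite
ω-limit set, we contradict the absence of periodic attractors. -/
lemma finite_omega_absurd (hf : IsContractingLorenz f c) (hpa : HasNoPeriodicAttractor f)
    {H : Set ℝ} {a₀ b₀ : ℝ} (hab : a₀ < b₀) (hH : H = Ioo a₀ b₀) (hsub : H ⊆ Icc 0 1)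
    (hgood : ∀ x ∈ H, GoodOrbit f c x)
    (hdisj : ∀ i j, 1 ≤ i → 1 ≤ j → i ≠ j → Disjoint (f^[i] '' H) (f^[j] '' H))
    {x : ℝ} (hx : x ∈ H) (hfin : (omegaLim f x).Finite) : False := by
  have hconn : H.OrdConnected := by rw [hH]; exact ordConnected_Ioo
  have hopen : IsOpen H := by rw [hH]; exact isOpen_Ioo
  have hne : H.Nonempty := by rw [hH]; exact nonempty_Ioo.mpr hab
  have hIoo : ∀ i : ℕ, ∃ p q : ℝ, p < q ∧ f^[i] '' H = Ioo p q := by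
    intro i
    have hclean : ∀ z ∈ H, ∀ j < i, f^[j] z ≠ c := fun z hz j _ => hgood z hz j
    obtain ⟨_, _, hsub2, hoc⟩ := block hf i hsub hconn hclean
    exact eq_Ioo_of_open (block_open hf i hsub hconn hopen hclean) hoc (hne.image _) hsub2
  choose p q hpq hT using hIoo
  -- lengths tend to zero
  have hsum : ∀ N : ℕ, ∑ i ∈ Finset.range N, (q (1+i) - p (1+i)) ≤ 1 := by
    intro N
    have := sum_lengths_le (T := fun i => f^[i] '' H) (fun i _ => hT i) (fun i _ => hpq i)
      (by intro i _
          have hclean : ∀ z ∈ H, ∀ j < i, f^[j] z ≠ c := fun z hz j _ => hgood z hz j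
          exact (block hf i hsub hconn hclean).2.2.1)
      hdisj (N + 1)
    rwa [Finset.sum_Ico_eq_sum_range, Nat.add_sub_cancel] at this
  have hsummable : Summable (fun i => q (1+i) - p (1+i)) :=
    summable_of_sum_range_le (fun i => by have := hpq (1+i); linarith) hsum
  have hlen : Tendsto (fun i => q (1+i) - p (1+i)) atTop (𝓝 0) :=
    hsummable.tendsto_atTop_zero
  -- all points of H have the same ω-limit set
  have homega : ∀ z ∈ H, ∀ w ∈ H, omegaLim f z ⊆ omegaLim f w := by
    intro z hz w hw y hy ε hε N
    have hev : ∀ᶠ i in atTop, q (1+i) - p (1+i) < ε/2 := by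
      have := Metric.tendsto_atTop.mp hlen (ε/2) (by linarith)
      obtain ⟨N₂, hN₂⟩ := this
      filter_upwards [eventually_ge_atTop N₂] with i hi
      have := hN₂ i hi
      rw [Real.dist_eq, sub_zero] at this
      exact lt_of_abs_lt this
    obtain ⟨N₂, hN₂⟩ := eventually_atTop.mp hev
    obtain ⟨n, hn, hny⟩ := hy (ε/2) (by linarith) (max N (N₂ + 1))
    refine ⟨n, le_trans (le_max_left _ _) hn, ?_⟩
    have hn1 : 1 ≤ n := by
      have := le_trans (le_max_right _ _) hn
      omega
    have hzn : f^[n] z ∈ Ioo (p n) (q n) := hT n ▸ mem_image_of_mem _ hz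
    have hwn : f^[n] w ∈ Ioo (p n) (q n) := hT n ▸ mem_image_of_mem _ hw
    have hlen2 : q n - p n < ε/2 := by
      have := hN₂ (n - 1) (by omega)
      rwa [show 1 + (n-1) = n by omega] at this
    have : |f^[n] w - f^[n] z| < ε/2 := by
      rw [abs_sub_lt_iff]
      constructor <;> [skip; skip] <;>
        · obtain ⟨h1, h2⟩ := hzn
          obtain ⟨h3, h4⟩ := hwn
          linarith
    calc |f^[n] w - y| ≤ |f^[n] w - f^[n] z| + |f^[n] z - y| := abs_sub_le _ _ _
      _ < ε := by linarith
  have homega' : ∀ z ∈ H, omegaLim f z = omegaLim f x :=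
    fun z hz => le_antisymm (homega z hz x hx) (homega x hx z hz)
  -- contradiction with hpa
  apply hpa
  refine ⟨omegaLim f x, hfin, omega_subset_Icc hf (hsub hx) (hgood x hx), ?_⟩
  refine ⟨x, ?_⟩
  have hHsub : H ⊆ {z | z ∈ Icc (0:ℝ) 1 ∧ omegaLim f z = omegaLim f x} :=
    fun z hz => ⟨hsub hz, homega' z hz⟩
  exact interior_maximal hHsub hopen hx

lemma abs_between {α β z y : ℝ} (h : α ≤ z ∧ z ≤ β ∨ β ≤ z ∧ z ≤ α) :
    |z - y| ≤ |α - y| + |β - y| := by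
  have h1 := le_abs_self (α - y)
  have h2 := le_abs_self (β - y)
  have h3 := neg_abs_le (α - y)
  have h4 := neg_abs_le (β - y)
  rcases h with ⟨ha, hb⟩ | ⟨ha, hb⟩ <;> (rw [abs_le]; constructor <;> linarith)

/-- Machine B : if two forward images of a good interval intersect, all points in some open
interval converge to a common finite limit cycle, contradicting the absence of
periodic attractors (or trivial dynamics). -/
lemma images_intersect_absurd (hf : IsContractingLorenz f c) (hpa : HasNoPeriodicAttractor f)
    {H : Set ℝ} {a₀ b₀ : ℝ} (hab : a₀ < b₀) (hH : H = Ioo a₀ b₀) (hsub : H ⊆ Icc 0 1)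
    (hgood : ∀ x ∈ H, GoodOrbit f c x) {i j : ℕ} (hij : i < j)
    (hnd : ¬ Disjoint (f^[i] '' H) (f^[j] '' H)) : False := by
  have hconn : H.OrdConnected := by rw [hH]; exact ordConnected_Ioo
  have hopen : IsOpen H := by rw [hH]; exact isOpen_Ioo
  have hne : H.Nonempty := by rw [hH]; exact nonempty_Ioo.mpr hab
  set k := j - i with hk_def
  have hk : 1 ≤ k := by omega
  -- the interval K = f^[i] '' H
  set K := f^[i] '' H with hK_def
  have hclean : ∀ z ∈ H, ∀ m (l : ℕ), l < m → f^[l] z ≠ c := fun z hz m l _ => hgood z hz l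
  have hKsub : K ⊆ Icc 0 1 := (block hf i hsub hconn (fun z hz l _ => hgood z hz l)).2.2.1
  have hKoc : K.OrdConnected := (block hf i hsub hconn (fun z hz l _ => hgood z hz l)).2.2.2
  have hKopen : IsOpen K := block_open hf i hsub hconn hopen (fun z hz l _ => hgood z hz l)
  have hKgood : ∀ y ∈ K, GoodOrbit f c y := by
    rintro y ⟨u, hu, rfl⟩
    exact good_shift (hgood u hu) i
  have hKne : K.Nonempty := hne.image _
  -- the intersection point z
  obtain ⟨z, hz1, hz2⟩ := Set.not_disjoint_iff.mp hnd
  have hzK : z ∈ K := hz1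
  have hzgK : z ∈ f^[k] '' K := by
    rw [hK_def, ← image_comp, ← Function.iterate_add]
    rwa [show k + i = j by omega]
  -- the chain M
  set Km : ℕ → Set ℝ := fun m => f^[k*m] '' K with hKm_def
  set M := ⋃ m, Km m with hM_def
  have hKm0 : Km 0 = K := by simp [hKm_def]
  have hKmgood : ∀ m, ∀ y ∈ Km m, GoodOrbit f c y := by
    rintro m y ⟨u, hu, rfl⟩
    exact good_shift (hKgood u hu) _
  have hKmsub : ∀ m, Km m ⊆ Icc 0 1 := fun m =>
    (block hf (k*m) hKsub hKoc (fun y hy l _ => hKgood y hy l)).2.2.1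
  have hKmoc : ∀ m, (Km m).OrdConnected := fun m =>
    (block hf (k*m) hKsub hKoc (fun y hy l _ => hKgood y hy l)).2.2.2
  have hMsub : M ⊆ Icc 0 1 := iUnion_subset hKmsub
  have hMgood : ∀ y ∈ M, GoodOrbit f c y := by
    intro y hy
    obtain ⟨m, hm⟩ := mem_iUnion.mp hy
    exact hKmgood m y hm
  have hlink : ∀ m, f^[k*m] z ∈ Km m ∩ Km (m+1) := by
    intro m
    constructor
    · exact mem_image_of_mem _ hzK
    · obtain ⟨w, hw, hwz⟩ := hzgK
      refine ⟨w, hw, ?_⟩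
      rw [← hwz, ← Function.iterate_add_apply]
      congr 1
  -- M is preconnected hence order-connected
  have hUpc : ∀ m, IsPreconnected (⋃ m' ∈ Finset.range (m+1), Km m') ∧
      z ∈ ⋃ m' ∈ Finset.range (m+1), Km m' := by
    intro m
    induction m with
    | zero =>
      have h0 : (⋃ m' ∈ Finset.range (0+1), Km m') = K := by
        simp [Finset.range_one, hKm0]
      rw [h0]
      exact ⟨hKoc.isPreconnected, hzK⟩
    | succ m ih =>
      have hsplit : ⋃ m' ∈ Finset.range (m+2), Km m' =
          Km (m+1) ∪ ⋃ m' ∈ Finset.range (m+1), Km m' := by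
        rw [Finset.range_add_one, Finset.set_biUnion_insert]
      constructor
      · rw [hsplit]
        refine IsPreconnected.union (f^[k*m] z) ?_ ?_ ((hKmoc (m+1)).isPreconnected) ih.1
        · exact (hlink m).2
        · exact mem_biUnion (Finset.self_mem_range_succ m) (hlink m).1
      · rw [hsplit]
        exact Or.inr ih.2
  have hMpc : IsPreconnected M := by
    apply isPreconnected_of_forall z
    intro y hy
    obtain ⟨m, hm⟩ := mem_iUnion.mp hy
    refine ⟨⋃ m' ∈ Finset.range (m+1), Km m', ?_, (hUpc m).2, ?_, (hUpc m).1⟩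
    · intro w hw
      obtain ⟨m', _, hm'⟩ := mem_iUnion₂.mp hw
      exact mem_iUnion.mpr ⟨m', hm'⟩
    · exact mem_biUnion (Finset.self_mem_range_succ m) hm
  have hMoc : M.OrdConnected := hMpc.ordConnected
  have hmono : ∀ r, StrictMonoOn f^[r] M := fun r =>
    (block hf r hMsub hMoc (fun y hy l _ => hMgood y hy l)).1
  have hMinv : ∀ x ∈ M, ∀ m, f^[k*m] x ∈ M := by
    intro x hx m
    obtain ⟨m', hm'⟩ := mem_iUnion.mp hx
    obtain ⟨w, hw, rfl⟩ := hm'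
    refine mem_iUnion.mpr ⟨m + m', ⟨w, hw, ?_⟩⟩
    rw [← Function.iterate_add_apply]
    congr 1
    ring
  -- dichotomy : identity on K, or a point moved by f^[k]
  by_cases hall : ∀ w ∈ K, f^[k] w = w
  · obtain ⟨κ₁, κ₂, hκ, hKIoo⟩ := eq_Ioo_of_open hKopen hKoc hKne hKsub
    exact hf.no_trivial_dynamics ⟨κ₁, κ₂, k, hκ, hk, fun x hx => hall x (hKIoo ▸ hx)⟩
  push_neg at hall
  obtain ⟨x₀, hx₀K, hx₀⟩ := hall
  have hx₀M : x₀ ∈ M := mem_iUnion.mpr ⟨0, hKm0 ▸ hx₀K⟩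
  set s : ℕ → ℝ := fun m => f^[k*m] x₀ with hs_def
  have hsmem : ∀ m, s m ∈ M := fun m => hMinv x₀ hx₀M m
  have hsrec : ∀ m, s (m+1) = f^[k*m] (f^[k] x₀) := by
    intro m
    show f^[k*(m+1)] x₀ = f^[k*m] (f^[k] x₀)
    rw [show k*(m+1) = k*m + k from by ring, Function.iterate_add_apply]
  have hgx₀M : f^[k] x₀ ∈ M := by
    have := hMinv x₀ hx₀M 1
    rwa [mul_one] at this
  -- unified data for the two orientations
  have hlohi : ∃ lo hi : ℝ, lo < hi ∧ lo ∈ M ∧ hi ∈ M ∧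
      (∀ x, lo < x → x < hi → ∀ m, (s m ≤ f^[k*m] x ∧ f^[k*m] x ≤ s (m+1)) ∨
        (s (m+1) ≤ f^[k*m] x ∧ f^[k*m] x ≤ s m)) ∧
      (∀ r : ℕ, ∃ L, Tendsto (fun m => f^[r] (s m)) atTop (𝓝 L)) := by
    rcases lt_or_gt_of_ne hx₀ with hgt | hlt
    case inr =>
      -- increasing case
      refine ⟨x₀, f^[k] x₀, hlt, hx₀M, hgx₀M, ?_, ?_⟩
      · intro x h1 h2 m
        have hxM : x ∈ M := hMoc.out hx₀M hgx₀M ⟨h1.le, h2.le⟩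
        left
        constructor
        · exact ((hmono (k*m)) hx₀M hxM h1).le
        · rw [hsrec m]
          exact ((hmono (k*m)) hxM hgx₀M h2).le
      · intro r
        have hsm : Monotone s := by
          apply monotone_nat_of_le_succ
          intro m
          rw [hsrec m]
          exact ((hmono (k*m)) hx₀M hgx₀M hlt).le
        have hψm : Monotone (fun m => f^[r] (s m)) := by
          intro m m' hmm'
          exact ((hmono r).monotoneOn) (hsmem m) (hsmem m') (hsm hmm')
        refine ⟨_, tendsto_atTop_ciSup hψm ⟨1, ?_⟩⟩
        rintro y ⟨m, rfl⟩
        exact (good_iter_mem_Icc hf (hMsub (hsmem m)) (hMgood _ (hsmem m)) r).2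
    case inl =>
      -- decreasing case
      refine ⟨f^[k] x₀, x₀, hgt, hgx₀M, hx₀M, ?_, ?_⟩
      · intro x h1 h2 m
        have hxM : x ∈ M := hMoc.out hgx₀M hx₀M ⟨h1.le, h2.le⟩
        right
        constructor
        · rw [hsrec m]
          exact ((hmono (k*m)) hgx₀M hxM h1).le
        · exact ((hmono (k*m)) hxM hx₀M h2).le
      · intro r
        have hsm : Antitone s := by
          apply antitone_nat_of_succ_le
          intro m
          rw [hsrec m]
          exact ((hmono (k*m)) hgx₀M hx₀M hgt).le
        have hψm : Antitone (fun m => f^[r] (s m)) := by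
          intro m m' hmm'
          exact ((hmono r).monotoneOn) (hsmem m') (hsmem m) (hsm hmm')
        refine ⟨_, tendsto_atTop_ciInf hψm ⟨0, ?_⟩⟩
        rintro y ⟨m, rfl⟩
        exact (good_iter_mem_Icc hf (hMsub (hsmem m)) (hMgood _ (hsmem m)) r).1
  obtain ⟨lo, hi, hlh, hloM, hhiM, hsand, hψ⟩ := hlohi
  choose L hL using hψ
  have hVM : ∀ x, lo < x → x < hi → x ∈ M := fun x h1 h2 => hMoc.out hloM hhiM ⟨h1.le, h2.le⟩
  -- convergence of all orbits in V along residues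
  have hφ : ∀ (r : ℕ), ∀ x, lo < x → x < hi →
      Tendsto (fun m => f^[r] (f^[k*m] x)) atTop (𝓝 (L r)) := by
    intro r x h1 h2
    have hxM : x ∈ M := hVM x h1 h2
    rw [tendsto_iff_dist_tendsto_zero]
    apply squeeze_zero (fun m => dist_nonneg)
      (g := fun m => dist (f^[r] (s m)) (L r) + dist (f^[r] (s (m+1))) (L r))
    · intro m
      have hb := hsand x h1 h2 m
      have hxmM : f^[k*m] x ∈ M := hMinv x hxM m
      simp only [Real.dist_eq]
      apply abs_between
      rcases hb with ⟨hb1, hb2⟩ | ⟨hb1, hb2⟩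
      · left
        exact ⟨((hmono r).monotoneOn) (hsmem m) hxmM hb1,
          ((hmono r).monotoneOn) hxmM (hsmem (m+1)) hb2⟩
      · right
        exact ⟨((hmono r).monotoneOn) (hsmem (m+1)) hxmM hb1,
          ((hmono r).monotoneOn) hxmM (hsmem m) hb2⟩
    · have h1' : Tendsto (fun m => dist (f^[r] (s m)) (L r)) atTop (𝓝 0) :=
        tendsto_iff_dist_tendsto_zero.mp (hL r)
      have h2' : Tendsto (fun m => dist (f^[r] (s (m+1))) (L r)) atTop (𝓝 0) :=
        h1'.comp (tendsto_add_atTop_nat 1)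
      simpa using h1'.add h2'
  -- the common ω-limit set
  set Λ : Set ℝ := L '' (Iio k) with hΛ_def
  have homega : ∀ x, lo < x → x < hi → omegaLim f x = Λ := by
    intro x h1 h2
    ext y
    constructor
    · -- ω(x) ⊆ Λ
      intro hy
      by_contra hyΛ
      have hLy : ∀ r < k, L r ≠ y := by
        intro r hr hry
        exact hyΛ ⟨r, hr, hry⟩
      have hkne : (Finset.range k).Nonempty := ⟨0, Finset.mem_range.mpr (by omega)⟩
      set ρ := (Finset.range k).inf' hkne (fun r => |L r - y|) with hρ_def
      have hρpos : 0 < ρ := by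
        rw [hρ_def, Finset.lt_inf'_iff]
        intro r hr
        rw [abs_pos, sub_ne_zero]
        exact hLy r (Finset.mem_range.mp hr)
      have hunif : ∀ r : ℕ, ∃ Nr, ∀ m ≥ Nr, |f^[r] (f^[k*m] x) - L r| < ρ/2 := by
        intro r
        obtain ⟨Nr, hNr⟩ := Metric.tendsto_atTop.mp (hφ r x h1 h2) (ρ/2) (by linarith)
        exact ⟨Nr, fun m hm => by have := hNr m hm; rwa [Real.dist_eq] at this⟩
      choose Nr hNr using hunif
      set M₀ := (Finset.range k).sup Nr with hM₀_def
      obtain ⟨n, hn, hny⟩ := hy (ρ/2) (by linarith) (k*(M₀+1))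
      set r := n % k with hr_def
      set m := n / k with hm_def
      have hrk : r < k := Nat.mod_lt _ (by omega)
      have hmM₀ : M₀ + 1 ≤ m := by
        rw [hm_def]
        rw [Nat.le_div_iff_mul_le (by omega), Nat.mul_comm]
        exact hn
      have hNrm : Nr r ≤ m :=
        le_trans (le_trans (Finset.le_sup (Finset.mem_range.mpr hrk)) (Nat.le_succ M₀)) hmM₀
      have heqn : f^[n] x = f^[r] (f^[k*m] x) := by
        rw [← Function.iterate_add_apply]
        congr 1
        simp only [hr_def, hm_def]
        rw [Nat.add_comm]
        exact (Nat.div_add_mod n k).symm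
      have hfar := hNr r m hNrm
      rw [← heqn] at hfar
      have hρle : ρ ≤ |L r - y| := Finset.inf'_le _ (Finset.mem_range.mpr hrk)
      have htri : |L r - y| ≤ |L r - f^[n] x| + |f^[n] x - y| := abs_sub_le _ _ _
      rw [abs_sub_comm (L r) (f^[n] x)] at htri
      linarith
    · -- Λ ⊆ ω(x)
      rintro ⟨r, hr, rfl⟩
      intro ε hε N
      obtain ⟨M₀, hM₀⟩ := Metric.tendsto_atTop.mp (hφ r x h1 h2) ε hε
      refine ⟨r + k * (max M₀ N), ?_, ?_⟩
      · have : N ≤ k * max M₀ N := le_trans (le_max_right M₀ N)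
          (Nat.le_mul_of_pos_left _ (by omega))
        omega
      · rw [Function.iterate_add_apply]
        have := hM₀ (max M₀ N) (le_max_left _ _)
        rwa [Real.dist_eq] at this
  -- contradiction with hpa
  apply hpa
  have hΛfin : Λ.Finite := (Set.finite_Iio k).image L
  have hΛsub : Λ ⊆ Icc 0 1 := by
    rintro y ⟨r, hr, rfl⟩
    refine isClosed_Icc.mem_of_tendsto (hL r) (Eventually.of_forall fun m => ?_)
    exact good_iter_mem_Icc hf (hMsub (hsmem m)) (hMgood _ (hsmem m)) r
  refine ⟨Λ, hΛfin, hΛsub, (lo + hi)/2, ?_⟩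
  have hVsub : Ioo lo hi ⊆ {x | x ∈ Icc (0:ℝ) 1 ∧ omegaLim f x = Λ} := by
    intro x hx
    exact ⟨hMsub (hVM x hx.1 hx.2), homega x hx.1 hx.2⟩
  exact interior_maximal hVsub isOpen_Ioo ⟨by linarith, by linarith⟩

/-- Lemma H : an open interval in [0,1] all of whose points have orbits avoiding c is
a wandering interval (in the absence of periodic attractors). -/
lemma good_interval_wandering (hf : IsContractingLorenz f c) (hpa : HasNoPeriodicAttractor f)
    {a b : ℝ} (hab : a < b) (hsub : Ioo a b ⊆ Icc 0 1)
    (hgood : ∀ x ∈ Ioo a b, GoodOrbit f c x) : IsWanderingInterval f c (Ioo a b) := by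
  have h3 : ∀ i j : ℕ, 1 ≤ i → 1 ≤ j → i ≠ j →
      Disjoint (f^[i] '' Ioo a b) (f^[j] '' Ioo a b) := by
    intro i j hi hj hij
    by_contra hnd
    rcases Nat.lt_or_ge i j with h | h
    · exact images_intersect_absurd hf hpa hab rfl hsub hgood h hnd
    · have hlt : j < i := by omega
      exact images_intersect_absurd hf hpa hab rfl hsub hgood hlt (fun hd => hnd hd.symm)
  have h4 : ∀ p : ℝ, IsAttractingPeriodicOrbit f p →
      Disjoint (Ioo a b) (omegaBasin f (posOrbit f p)) := by
    intro p hp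
    rw [Set.disjoint_left]
    intro x hx hxb
    have hfin : (omegaLim f x).Finite := (posOrbit_finite hp.1).subset hxb
    exact finite_omega_absurd hf hpa hab rfl hsub hgood h3 hx hfin
  exact ⟨⟨a, b, hab, rfl⟩, hsub, fun n x hx => hgood x hx n, h3, h4⟩

lemma uniqueDiffOn_lorDom (hc : c ∈ Ioo (0:ℝ) 1) : UniqueDiffOn ℝ (lorDom c) := by
  intro x hx
  have hxc : x ≠ c := hx.2
  rcases lt_or_gt_of_ne hxc with h | h
  · refine (uniqueDiffWithinAt_convex (convex_Ioo x c) ?_ ?_).mono ?_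
    · rw [interior_Ioo]; exact nonempty_Ioo.mpr h
    · rw [closure_Ioo (ne_of_lt h)]; exact ⟨le_refl x, h.le⟩
    · intro y hy
      exact ⟨⟨le_trans hx.1.1 hy.1.le, le_of_lt (lt_trans hy.2 hc.2)⟩, ne_of_lt hy.2⟩
  · refine (uniqueDiffWithinAt_convex (convex_Ioo c x) ?_ ?_).mono ?_
    · rw [interior_Ioo]; exact nonempty_Ioo.mpr h
    · rw [closure_Ioo (ne_of_lt h)]; exact ⟨h.le, le_refl x⟩
    · intro y hy
      exact ⟨⟨le_of_lt (lt_of_le_of_lt hc.1.le hy.1), le_trans hy.2.le hx.1.2⟩, ne_of_gt hy.1⟩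

/-- Exponential distortion bound for the derivative on a compact convex piece of the domain. -/
lemma side_exp_bound (hf : IsContractingLorenz f c) {R : Set ℝ} (hR : R ⊆ lorDom c)
    (hconv : Convex ℝ R) (hcomp : IsCompact R) (hne : R.Nonempty)
    (hud : UniqueDiffOn ℝ R) :
    ∃ L, 0 ≤ L ∧ ∀ x ∈ R, ∀ y ∈ R, derivWithin f (lorDom c) x ≤
      derivWithin f (lorDom c) y * Real.exp (L * |x - y|) := by
  have hUD : UniqueDiffOn ℝ (lorDom c) := uniqueDiffOn_lorDom hf.c_mem
  set g := derivWithin f (lorDom c) with hg_def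
  have hg1 : ContDiffOn ℝ 1 g (lorDom c) := hf.smooth.derivWithin hUD (by norm_num)
  have hgc : ContinuousOn g (lorDom c) := hg1.continuousOn
  have hgd : DifferentiableOn ℝ g (lorDom c) := hg1.differentiableOn one_ne_zero
  have hg'c : ContinuousOn (derivWithin g (lorDom c)) (lorDom c) :=
    hg1.continuousOn_derivWithin hUD (le_refl 1)
  obtain ⟨x₀, hx₀R, hx₀min'⟩ := hcomp.exists_isMinOn hne (hgc.mono hR)
  have hx₀min : ∀ y ∈ R, g x₀ ≤ g y := fun y hy => hx₀min' hy
  have hm : 0 < g x₀ := hf.deriv_pos x₀ (hR hx₀R)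
  obtain ⟨xM, hxM, hmax'⟩ := hcomp.exists_isMaxOn hne ((hg'c.mono hR).norm)
  have hmax : ∀ y ∈ R, ‖derivWithin g (lorDom c) y‖ ≤ ‖derivWithin g (lorDom c) xM‖ :=
    fun y hy => hmax' hy
  set M := ‖derivWithin g (lorDom c) xM‖ with hM_def
  have hM0 : 0 ≤ M := norm_nonneg _
  have hgR : ∀ x ∈ R, ‖derivWithin g R x‖ ≤ M := by
    intro x hx
    have heq : derivWithin g R x = derivWithin g (lorDom c) x :=
      ((hgd x (hR hx)).hasDerivWithinAt.mono hR).derivWithin (hud x hx)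
    rw [heq]
    exact hmax x hx
  set L := M / g x₀ with hL_def
  have hL0 : 0 ≤ L := by positivity
  refine ⟨L, hL0, ?_⟩
  intro x hx y hy
  have hgy : 0 < g y := hf.deriv_pos y (hR hy)
  have hLip : ‖g x - g y‖ ≤ M * ‖x - y‖ :=
    hconv.norm_image_sub_le_of_norm_derivWithin_le (hgd.mono hR) hgR hy hx
  have h1 : g x ≤ g y + M * |x - y| := by
    rw [Real.norm_eq_abs, Real.norm_eq_abs] at hLip
    have h2 := le_abs_self (g x - g y)
    linarith
  have hML : M = L * g x₀ := by
    rw [hL_def, div_mul_cancel₀]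
    exact ne_of_gt hm
  have h2 : M * |x - y| ≤ g y * (L * |x - y|) := by
    rw [hML]
    have hkey := mul_le_mul_of_nonneg_right (hx₀min y hy)
      (mul_nonneg hL0 (abs_nonneg (x - y)))
    calc L * g x₀ * |x - y| = g x₀ * (L * |x - y|) := by ring
      _ ≤ g y * (L * |x - y|) := hkey
  have h3 : 1 + L * |x - y| ≤ Real.exp (L * |x - y|) := by
    have := Real.add_one_le_exp (L * |x - y|)
    linarith
  calc g x ≤ g y + g y * (L * |x - y|) := by linarith
    _ = g y * (1 + L * |x - y|) := by ring
    _ ≤ g y * Real.exp (L * |x - y|) := mul_le_mul_of_nonneg_left h3 hgy.le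

lemma image_Ioo_of {F : ℝ → ℝ} {α β : ℝ} (hαβ : α < β) (hmono : StrictMonoOn F (Icc α β))
    (hcont : ContinuousOn F (Icc α β)) : F '' Ioo α β = Ioo (F α) (F β) := by
  apply Subset.antisymm
  · rintro y ⟨x, hx, rfl⟩
    exact ⟨hmono (left_mem_Icc.mpr hαβ.le) (Ioo_subset_Icc_self hx) hx.1,
      hmono (Ioo_subset_Icc_self hx) (right_mem_Icc.mpr hαβ.le) hx.2⟩
  · intro y hy
    obtain ⟨x, hx, hxy⟩ := intermediate_value_Icc hαβ.le hcont
      (⟨hy.1.le, hy.2.le⟩ : y ∈ Icc (F α) (F β))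
    refine ⟨x, ⟨?_, ?_⟩, hxy⟩
    · rcases hx.1.lt_or_eq with h | h
      · exact h
      · exact absurd hy.1 (by rw [h, hxy]; exact lt_irrefl y)
    · rcases hx.2.lt_or_eq with h | h
      · exact h
      · exact absurd hy.2 (by rw [← h, hxy]; exact lt_irrefl y)

lemma Ioo_bounds {a b : ℝ} (hab : a < b) (h : Ioo a b ⊆ Icc (0:ℝ) 1) : 0 ≤ a ∧ b ≤ 1 := by
  constructor
  · by_contra h0
    push_neg at h0
    have hm : a < min b 0 := lt_min hab h0
    have hy : (a + min b 0)/2 ∈ Ioo a b :=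
      ⟨by linarith, by have := min_le_left b 0; linarith⟩
    have := (h hy).1
    have := min_le_right b 0
    linarith
  · by_contra h1
    push_neg at h1
    have hm : max a 1 < b := max_lt hab h1
    have hy : (max a 1 + b)/2 ∈ Ioo a b :=
      ⟨by have := le_max_left a 1; linarith, by linarith⟩
    have := (h hy).2
    have := le_max_right a 1
    linarith

lemma Ioo_disj_cases {a₁ b₁ a₂ b₂ : ℝ} (h1 : a₁ < b₁) (h2 : a₂ < b₂)
    (hd : Ioo a₁ b₁ ∩ Ioo a₂ b₂ = ∅) : b₁ ≤ a₂ ∨ b₂ ≤ a₁ := by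
  by_contra hcon
  push_neg at hcon
  obtain ⟨hc1, hc2⟩ := hcon
  set y := (max a₁ a₂ + min b₁ b₂)/2 with hy_def
  have hmm : max a₁ a₂ < min b₁ b₂ := by
    rw [max_lt_iff, lt_min_iff, lt_min_iff]
    exact ⟨⟨h1, hc2⟩, ⟨hc1, h2⟩⟩
  have hy : y ∈ Ioo a₁ b₁ ∩ Ioo a₂ b₂ := by
    have l1 := le_max_left a₁ a₂
    have l2 := le_max_right a₁ a₂
    have l3 := min_le_left b₁ b₂
    have l4 := min_le_right b₁ b₂
    exact ⟨⟨by simp only [hy_def]; linarith, by simp only [hy_def]; linarith⟩,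
      ⟨by simp only [hy_def]; linarith, by simp only [hy_def]; linarith⟩⟩
  rw [hd] at hy
  exact hy

end WDense

/-- The union of all wandering intervals. -/
def WSet (f : ℝ → ℝ) (c : ℝ) : Set ℝ := {x | ∃ I : Set ℝ, IsWanderingInterval f c I ∧ x ∈ I}

namespace WDense

lemma WSet_open : IsOpen (WSet f c) := by
  have h : WSet f c = ⋃₀ {I | IsWanderingInterval f c I} := by
    ext x
    simp only [WSet, mem_sUnion, mem_setOf_eq]
  rw [h]
  apply isOpen_sUnion
  intro I hI
  obtain ⟨a, b, hab, hIoo⟩ := hI.1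
  rw [hIoo]
  exact isOpen_Ioo

lemma WSet_subset : WSet f c ⊆ Icc 0 1 := by
  rintro x ⟨I, hI, hx⟩
  exact hI.2.1 hx

lemma WSet_good : ∀ x ∈ WSet f c, GoodOrbit f c x := by
  rintro x ⟨I, hI, hx⟩
  exact wand_good hI hx

lemma subset_WSet {I : Set ℝ} (hI : IsWanderingInterval f c I) : I ⊆ WSet f c :=
  fun x hx => ⟨I, hI, hx⟩

lemma c_notin_WSet : c ∉ WSet f c := by
  rintro ⟨I, hI, hx⟩
  exact wand_good hI hx 0 (by simp)

/-- If an interval avoids the union of wandering intervals, we can transport this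
to a punctured neighbourhood of the critical point. -/
lemma margin_of_bad (hf : IsContractingLorenz f c) (hpa : HasNoPeriodicAttractor f)
    {u v : ℝ} (huv : u < v) (hU01 : Ioo u v ⊆ Ioo 0 1)
    (hUS : Ioo u v ∩ WSet f c = ∅) :
    ∃ t₁ t₂ : ℝ, t₁ < c ∧ c < t₂ ∧ 0 ≤ t₁ ∧ t₂ ≤ 1 ∧ Ioo t₁ t₂ ∩ WSet f c = ∅ := by
  have hUIcc : Ioo u v ⊆ Icc 0 1 := hU01.trans Ioo_subset_Icc_self
  -- some point of U is not good
  have hbad : ∃ z ∈ Ioo u v, ∃ n : ℕ, f^[n] z = c := by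
    by_contra hgood
    push_neg at hgood
    have hw := good_interval_wandering hf hpa huv hUIcc (fun x hx n => hgood x hx n)
    have : (u+v)/2 ∈ Ioo u v ∩ WSet f c :=
      ⟨⟨by linarith, by linarith⟩, subset_WSet hw ⟨by linarith, by linarith⟩⟩
    rw [hUS] at this
    exact this
  obtain ⟨z, hzU, hzhit⟩ := hbad
  -- minimal hitting time
  have hex : ∃ n, f^[n] z = c := hzhit
  classical
  set n := Nat.find hex with hn_def
  have hn : f^[n] z = c := Nat.find_spec hex
  have hmin : ∀ i < n, f^[i] z ≠ c := fun i hi => Nat.find_min hex hi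
  -- the partial orbit lies in (0,1) \ {c}
  have hz01 : ∀ i < n, f^[i] z ∈ Ioo 0 1 := by
    intro i hi
    have hIcc : f^[i] z ∈ Icc 0 1 :=
      iter_mem_Icc hf (hUIcc hzU) (fun l hl => hmin l hl) i hi.le
    rcases hIcc.1.lt_or_eq with h0 | h0
    · rcases hIcc.2.lt_or_eq with h1 | h1
      · exact ⟨h0, h1⟩
      · exfalso
        have : f^[n] z = 1 := by
          have h2 : f^[n-i] (f^[i] z) = f^[n] z := by
            rw [← Function.iterate_add_apply, Nat.sub_add_cancel hi.le]
          rw [← h2, h1, Function.iterate_fixed hf.map1]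
        rw [hn] at this
        exact (ne_of_lt hf.c_mem.2) this
    · exfalso
      have : f^[n] z = 0 := by
        have h2 : f^[n-i] (f^[i] z) = f^[n] z := by
          rw [← Function.iterate_add_apply, Nat.sub_add_cancel hi.le]
        rw [← h2, ← h0, Function.iterate_fixed hf.map0]
      rw [hn] at this
      exact (ne_of_gt hf.c_mem.1) this
  -- continuity of the partial iterates at z
  have hcont : ∀ i ≤ n, ContinuousAt f^[i] z := by
    intro i
    induction i with
    | zero => intro _; exact continuousAt_id
    | succ l ih =>
      intro hl
      have hfl : ContinuousAt f (f^[l] z) := by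
        have h01 := hz01 l (by omega)
        exact hf.smooth.continuousOn.continuousAt
          (lorDom_mem_nhds hf.c_mem h01.1 h01.2 (hmin l (by omega)))
      rw [Function.iterate_succ']
      exact hfl.comp (ih (by omega))
  -- neighbourhood on which the first n iterates avoid c
  have hev : ∀ᶠ x in 𝓝 z, (∀ i < n, f^[i] x ≠ c) ∧ x ∈ Ioo u v := by
    refine Filter.Eventually.and ?_ (isOpen_Ioo.mem_nhds hzU)
    rw [show (fun x => ∀ i < n, f^[i] x ≠ c) = fun x => ∀ i ∈ Iio n, f^[i] x ≠ c from rfl]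
    rw [Filter.eventually_all_finite (finite_Iio n)]
    intro i hi
    exact (hcont i (le_of_lt hi)).eventually_ne (hmin i hi)
  obtain ⟨δ, hδ, hδP⟩ := Metric.eventually_nhds_iff.mp hev
  set A : Set ℝ := Ioo (z - δ/2) (z + δ/2) with hA_def
  have hAP : ∀ x ∈ A, (∀ i < n, f^[i] x ≠ c) ∧ x ∈ Ioo u v := by
    intro x hx
    apply hδP
    rw [Real.dist_eq, abs_sub_lt_iff]
    constructor <;> [skip; skip] <;> (obtain ⟨h1, h2⟩ := hx; linarith)
  have hAU : A ⊆ Ioo u v := fun x hx => (hAP x hx).2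
  have hAIcc : A ⊆ Icc 0 1 := hAU.trans hUIcc
  have hAconn : A.OrdConnected := ordConnected_Ioo
  have hAopen : IsOpen A := isOpen_Ioo
  have hAclean : ∀ x ∈ A, ∀ i < n, f^[i] x ≠ c := fun x hx => (hAP x hx).1
  have hzA : z ∈ A := ⟨by linarith, by linarith⟩
  -- the image of A under f^[n]
  obtain ⟨hmono, hcont2, hsub2, hoc2⟩ := block hf n hAIcc hAconn hAclean
  obtain ⟨t₁, t₂, ht, himg⟩ := eq_Ioo_of_open (block_open hf n hAIcc hAconn hAopen hAclean)
    hoc2 ⟨f^[n] z, mem_image_of_mem _ hzA⟩ hsub2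
  have hcmem : c ∈ Ioo t₁ t₂ := by
    rw [← himg, ← hn]
    exact mem_image_of_mem _ hzA
  refine ⟨t₁, t₂, hcmem.1, hcmem.2, (Ioo_bounds ht (himg ▸ hsub2)).1,
    (Ioo_bounds ht (himg ▸ hsub2)).2, ?_⟩
  -- no wandering interval meets (t₁, t₂)
  by_contra hne
  have hne2 : (Ioo t₁ t₂ ∩ WSet f c).Nonempty := nonempty_iff_ne_empty.mpr hne
  obtain ⟨y, hyI, ⟨Iw, hIw, hyIw⟩⟩ := hne2
  -- pull back Iw to A
  set J := A ∩ f^[n] ⁻¹' Iw with hJ_def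
  have hJopen : IsOpen J := by
    apply hcont2.isOpen_inter_preimage hAopen
    obtain ⟨α, β, hαβ, hIoo⟩ := hIw.1
    rw [hIoo]
    exact isOpen_Ioo
  have hIwoc : Iw.OrdConnected := by
    obtain ⟨α, β, hαβ, hIoo⟩ := hIw.1
    rw [hIoo]
    exact ordConnected_Ioo
  have hJoc : J.OrdConnected := by
    constructor
    intro x₁ hx₁ x₂ hx₂ x hx
    have hxA : x ∈ A := hAconn.out hx₁.1 hx₂.1 hx
    refine ⟨hxA, hIwoc.out hx₁.2 hx₂.2 ⟨?_, ?_⟩⟩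
    · exact hmono.monotoneOn hx₁.1 hxA hx.1
    · exact hmono.monotoneOn hxA hx₂.1 hx.2
  have hJne : J.Nonempty := by
    rw [← himg] at hyI
    obtain ⟨x, hxA, hxy⟩ := hyI
    exact ⟨x, hxA, by rw [mem_preimage, hxy]; exact hyIw⟩
  obtain ⟨α, β, hαβ, hJIoo⟩ := eq_Ioo_of_open hJopen hJoc hJne (fun x hx => hAIcc hx.1)
  have hJw : IsWanderingInterval f c J :=
    pullback hIw hαβ hJIoo (fun x hx => hAIcc hx.1) n
      (fun x hx i hi => hAclean x hx.1 i hi) (fun x hx => hx.2)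
  obtain ⟨x, hxJ⟩ := hJne
  have : x ∈ Ioo u v ∩ WSet f c := ⟨hAU hxJ.1, subset_WSet hJw hxJ⟩
  rw [hUS] at this
  exact this

/-- Schwartz-type enlargement: a wandering interval whose forward orbit stays away from a
neighbourhood of the critical point can be enlarged to the left, keeping all orbits good. -/
lemma schwartz_enlarge (hf : IsContractingLorenz f c) {p q δ : ℝ} (hpq : p < q)
    (hδ0 : 0 < δ) (hδc : δ ≤ c) (hδ1 : c + δ ≤ 1) (hp0 : 0 < p)
    (hTw : IsWanderingInterval f c (Ioo p q))
    (hmargin : ∀ n : ℕ, (f^[n] '' Ioo p q) ∩ Ioo (c - δ) (c + δ) = ∅) :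
    ∃ ε, 0 < ε ∧ ε ≤ p ∧ ∀ x ∈ Ioo (p - ε) q, GoodOrbit f c x := by
  have hc := hf.c_mem
  have hc0 : (0:ℝ) < c := hc.1
  have hc1 : c < 1 := hc.2
  set κ := δ/2 with hκ_def
  have hκ0 : 0 < κ := by rw [hκ_def]; linarith
  have hκδ : κ < δ := by rw [hκ_def]; linarith
  have hcκ : 0 < c - κ := by rw [hκ_def]; linarith
  have hcκ1 : c + κ < 1 := by rw [hκ_def]; linarith
  -- the two sides
  have hRlsub : Icc 0 (c - κ) ⊆ Ico 0 c := fun x hx => ⟨hx.1, by have := hx.2; linarith⟩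
  have hRrsub : Icc (c + κ) 1 ⊆ Ioc c 1 := fun x hx => ⟨by have := hx.1; linarith, hx.2⟩
  have hRl_lor : Icc 0 (c - κ) ⊆ lorDom c := hRlsub.trans (Ico_subset_lorDom hc)
  have hRr_lor : Icc (c + κ) 1 ⊆ lorDom c := hRrsub.trans (Ioc_subset_lorDom hc)
  have hmonol : StrictMonoOn f (Icc 0 (c - κ)) := (strictMonoOn_left hf).mono hRlsub
  have hmonor : StrictMonoOn f (Icc (c + κ) 1) := (strictMonoOn_right hf).mono hRrsub
  obtain ⟨Ll, hLl0, hLl⟩ := side_exp_bound hf hRl_lor (convex_Icc _ _) isCompact_Icc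
    ⟨0, le_refl 0, by linarith⟩ (uniqueDiffOn_Icc hcκ)
  obtain ⟨Lr, hLr0, hLr⟩ := side_exp_bound hf hRr_lor (convex_Icc _ _) isCompact_Icc
    ⟨1, by constructor <;> linarith⟩ (uniqueDiffOn_Icc hcκ1)
  set L := max Ll Lr with hL_def
  have hL0 : 0 ≤ L := le_trans hLl0 (le_max_left _ _)
  have hkey : ∀ (R : Set ℝ), (R = Icc 0 (c-κ) ∨ R = Icc (c+κ) 1) → ∀ x ∈ R, ∀ y ∈ R,
      derivWithin f (lorDom c) x ≤ derivWithin f (lorDom c) y * Real.exp (L * |x - y|) := by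
    rintro R (rfl | rfl) x hx y hy
    · refine (hLl x hx y hy).trans (mul_le_mul_of_nonneg_left ?_
        (le_of_lt (hf.deriv_pos y (hRl_lor hy))))
      exact Real.exp_le_exp.mpr (mul_le_mul_of_nonneg_right (le_max_left _ _) (abs_nonneg _))
    · refine (hLr x hx y hy).trans (mul_le_mul_of_nonneg_left ?_
        (le_of_lt (hf.deriv_pos y (hRr_lor hy))))
      exact Real.exp_le_exp.mpr (mul_le_mul_of_nonneg_right (le_max_right _ _) (abs_nonneg _))
  -- constants
  set D := Real.exp (4*L) with hD_def
  have hD1 : 1 ≤ D := Real.one_le_exp (by positivity)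
  have hD0 : 0 < D := lt_of_lt_of_le one_pos hD1
  set ρ := min κ 1 / D with hρ_def
  have hρ0 : 0 < ρ := div_pos (lt_min hκ0 one_pos) hD0
  have hDρ : ρ * D ≤ min κ 1 := by
    rw [hρ_def, div_mul_cancel₀ _ (ne_of_gt hD0)]
  set q' := (p+q)/2 with hq'_def
  have hpq' : p < q' := by rw [hq'_def]; linarith
  have hq'q : q' < q := by rw [hq'_def]; linarith
  set ε := min (ρ * (q' - p)) (p/2) with hε_def
  have hε0 : 0 < ε := lt_min (mul_pos hρ0 (by linarith)) (by linarith)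
  have hεp2 : ε ≤ p/2 := min_le_right _ _
  have hερ : ε ≤ ρ * (q' - p) := min_le_left _ _
  refine ⟨ε, hε0, by linarith, ?_⟩
  set aa : ℕ → ℝ := fun n => f^[n] p with haa_def
  set bb : ℕ → ℝ := fun n => f^[n] q with hbb_def
  set uu : ℕ → ℝ := fun n => f^[n] (p - ε) with huu_def
  set vv : ℕ → ℝ := fun n => f^[n] q' with hvv_def
  have hTsub : Ioo p q ⊆ Icc 0 1 := hTw.2.1
  have hq1 : q ≤ 1 := (Ioo_bounds hpq hTsub).2
  have hTgood : ∀ x ∈ Ioo p q, GoodOrbit f c x := fun x hx => wand_good hTw hx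
  -- endpoint dynamics and sides
  have hQ : ∀ n, (aa n < bb n) ∧ (f^[n] '' Ioo p q = Ioo (aa n) (bb n)) ∧
      (Icc (aa n) (bb n) ⊆ Icc 0 (c - δ) ∨ Icc (aa n) (bb n) ⊆ Icc (c + δ) 1) := by
    intro n
    induction n with
    | zero =>
      refine ⟨hpq, by rw [show aa 0 = p from rfl, show bb 0 = q from rfl]; simp, ?_⟩
      have h0 : Ioo p q ∩ Ioo (c - δ) (c + δ) = ∅ := by simpa using hmargin 0
      rcases Ioo_disj_cases hpq (by linarith) h0 with h | h
      · left; intro x hx; exact ⟨le_trans hp0.le hx.1, le_trans hx.2 h⟩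
      · right; intro x hx; exact ⟨le_trans h hx.1, le_trans hx.2 hq1⟩
    | succ n ih =>
      obtain ⟨hab, himg, hside⟩ := ih
      have hmc : StrictMonoOn f (Icc (aa n) (bb n)) ∧ Icc (aa n) (bb n) ⊆ lorDom c := by
        rcases hside with h | h
        · have hsub2 : Icc (aa n) (bb n) ⊆ Ico 0 c :=
            fun x hx => ⟨(h hx).1, by have := (h hx).2; linarith⟩
          exact ⟨(strictMonoOn_left hf).mono hsub2, hsub2.trans (Ico_subset_lorDom hc)⟩
        · have hsub2 : Icc (aa n) (bb n) ⊆ Ioc c 1 :=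
            fun x hx => ⟨by have := (h hx).1; linarith, (h hx).2⟩
          exact ⟨(strictMonoOn_right hf).mono hsub2, hsub2.trans (Ioc_subset_lorDom hc)⟩
      obtain ⟨hmono2, hlor2⟩ := hmc
      have hcont2 : ContinuousOn f (Icc (aa n) (bb n)) := hf.smooth.continuousOn.mono hlor2
      have haa1 : aa (n+1) = f (aa n) := Function.iterate_succ_apply' f n p
      have hbb1 : bb (n+1) = f (bb n) := Function.iterate_succ_apply' f n q
      have hab1 : aa (n+1) < bb (n+1) := by
        rw [haa1, hbb1]
        exact hmono2 (left_mem_Icc.mpr hab.le) (right_mem_Icc.mpr hab.le) hab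
      have himg1 : f^[n+1] '' Ioo p q = Ioo (aa (n+1)) (bb (n+1)) := by
        rw [Function.iterate_succ', Set.image_comp, himg,
          image_Ioo_of hab hmono2 hcont2, haa1, hbb1]
      have hmem1 : f (aa n) ∈ Icc (0:ℝ) 1 := hf.maps (hlor2 (left_mem_Icc.mpr hab.le))
      have hmem2 : f (bb n) ∈ Icc (0:ℝ) 1 := hf.maps (hlor2 (right_mem_Icc.mpr hab.le))
      refine ⟨hab1, himg1, ?_⟩
      have hdisj1 : Ioo (aa (n+1)) (bb (n+1)) ∩ Ioo (c - δ) (c + δ) = ∅ :=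
        himg1 ▸ hmargin (n+1)
      rcases Ioo_disj_cases hab1 (by linarith) hdisj1 with h | h
      · left; intro x hx
        exact ⟨le_trans (haa1 ▸ hmem1.1) hx.1, le_trans hx.2 h⟩
      · right; intro x hx
        exact ⟨le_trans h hx.1, le_trans hx.2 (hbb1 ▸ hmem2.2)⟩
  have haabb : ∀ n, 0 ≤ aa n ∧ bb n ≤ 1 ∧ bb n - aa n ≤ 1 := by
    intro n
    obtain ⟨hab, _, hside⟩ := hQ n
    rcases hside with h | h
    · have h1 := h (left_mem_Icc.mpr hab.le)
      have h2 := h (right_mem_Icc.mpr hab.le)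
      exact ⟨h1.1, by have := h2.2; linarith, by have := h1.1; have := h2.2; linarith⟩
    · have h1 := h (left_mem_Icc.mpr hab.le)
      have h2 := h (right_mem_Icc.mpr hab.le)
      exact ⟨by have := h1.1; linarith, h2.2, by have := h1.1; have := h2.2; linarith⟩
  have hlen_sum : ∀ N, ∑ j ∈ Finset.range N, (bb j - aa j) ≤ 2 := by
    intro N
    rcases Nat.eq_zero_or_pos N with rfl | hN
    · simp
    have hS := sum_lengths_le (T := fun j => f^[j] '' Ioo p q) (a := aa) (b := bb)
      (fun i _ => (hQ i).2.1) (fun i _ => (hQ i).1)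
      (fun i _ => by
        show f^[i] '' Ioo p q ⊆ Icc 0 1
        rw [(hQ i).2.1]
        intro x hx
        obtain ⟨e1, e2, _⟩ := haabb i
        exact ⟨by have := hx.1; linarith, by have := hx.2; linarith⟩)
      hTw.2.2.2.1 N
    have hsplit : ∑ j ∈ Finset.range N, (bb j - aa j) =
        (bb 0 - aa 0) + ∑ j ∈ Finset.Ico 1 N, (bb j - aa j) := by
      rw [Finset.range_eq_Ico, Finset.sum_eq_sum_Ico_succ_bot hN]
    rw [hsplit]
    have h0 : bb 0 - aa 0 ≤ 1 := (haabb 0).2.2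
    linarith
  set W : ℕ → ℝ := fun n => ∑ j ∈ Finset.range n, (vv j - uu j) with hW_def
  -- side data provider
  have hRfacts : ∀ n, 0 ≤ uu n → uu n < aa n → aa n < vv n → vv n ≤ bb n →
      aa n - uu n ≤ κ →
      ∃ R : Set ℝ, (R = Icc 0 (c-κ) ∨ R = Icc (c+κ) 1) ∧ R ⊆ lorDom c ∧ StrictMonoOn f R ∧
        Icc (uu n) (vv n) ⊆ R ∧ bb n ∈ R ∧
        (∀ x, uu n < x → x < vv n → lorDom c ∈ 𝓝 x) := by
    intro n h0 h1 h2 h3 h4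
    obtain ⟨hab, _, hside⟩ := hQ n
    rcases hside with h | h
    · have hbside := h (right_mem_Icc.mpr hab.le)
      have haside := h (left_mem_Icc.mpr hab.le)
      refine ⟨Icc 0 (c-κ), Or.inl rfl, hRl_lor, hmonol, ?_, ?_, ?_⟩
      · intro x hx
        refine ⟨le_trans h0 hx.1, ?_⟩
        have := hbside.2
        have := hx.2
        linarith
      · exact ⟨by have := haside.1; linarith, by have := hbside.2; linarith⟩
      · intro x hx1 hx2
        apply lorDom_mem_nhds hc
        · linarith
        · have := hbside.2; linarith
        · have := hbside.2
          intro hxc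
          rw [hxc] at hx2
          linarith
    · have hbside := h (right_mem_Icc.mpr hab.le)
      have haside := h (left_mem_Icc.mpr hab.le)
      refine ⟨Icc (c+κ) 1, Or.inr rfl, hRr_lor, hmonor, ?_, ?_, ?_⟩
      · intro x hx
        refine ⟨?_, le_trans (le_trans hx.2 h3) hbside.2⟩
        have := haside.1
        have := hx.1
        linarith
      · exact ⟨by have := haside.1; linarith, hbside.2⟩
      · intro x hx1 hx2
        have hxgc : c < x := by have := haside.1; linarith
        apply lorDom_mem_nhds hc
        · linarith
        · have : x < vv n := hx2
          have hv1 : vv n ≤ 1 := le_trans h3 hbside.2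
          rcases lt_or_eq_of_le hv1 with hv | hv
          · linarith
          · linarith [hx2, hv]
        · exact ne_of_gt hxgc
  -- master induction
  have hP : ∀ n, (0 ≤ uu n ∧ uu n < aa n ∧ aa n < vv n ∧ vv n ≤ bb n ∧
      aa n - uu n ≤ ρ * Real.exp (L * W n) * (vv n - aa n)) ∧ W n ≤ 4 := by
    intro n
    induction n using Nat.strong_induction_on with
    | _ n ih =>
      have hWn : W n ≤ 4 := by
        have hterm : ∀ j ∈ Finset.range n, vv j - uu j ≤ 2 * (bb j - aa j) := by
          intro j hj
          obtain ⟨⟨hj0, hj1, hj2, hj3, hj4⟩, hjW⟩ := ih j (Finset.mem_range.mp hj)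
          have hexp : Real.exp (L * W j) ≤ D := by
            rw [hD_def]
            apply Real.exp_le_exp.mpr
            calc L * W j ≤ L * 4 := mul_le_mul_of_nonneg_left hjW hL0
              _ = 4 * L := by ring
          have ht0 : (0:ℝ) ≤ vv j - aa j := by linarith
          have hbt : aa j - uu j ≤ vv j - aa j := by
            calc aa j - uu j ≤ ρ * Real.exp (L * W j) * (vv j - aa j) := hj4
              _ ≤ ρ * D * (vv j - aa j) :=
                mul_le_mul_of_nonneg_right (mul_le_mul_of_nonneg_left hexp hρ0.le) ht0
              _ ≤ 1 * (vv j - aa j) :=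
                mul_le_mul_of_nonneg_right (le_trans hDρ (min_le_right _ _)) ht0
              _ = vv j - aa j := one_mul _
          linarith
        calc W n ≤ ∑ j ∈ Finset.range n, 2 * (bb j - aa j) := Finset.sum_le_sum hterm
          _ = 2 * ∑ j ∈ Finset.range n, (bb j - aa j) := by rw [Finset.mul_sum]
          _ ≤ 2 * 2 := by have := hlen_sum n; linarith
          _ = 4 := by norm_num
      refine ⟨?_, hWn⟩
      match n, ih with
      | 0, _ =>
        have hu0 : uu 0 = p - ε := rfl
        have ha0 : aa 0 = p := rfl
        have hv0 : vv 0 = q' := rfl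
        have hb0 : bb 0 = q := rfl
        have hW0 : W 0 = 0 := by simp [hW_def]
        refine ⟨by rw [hu0]; linarith, by rw [hu0, ha0]; linarith,
          by rw [ha0, hv0]; exact hpq', by rw [hv0, hb0]; exact hq'q.le, ?_⟩
        rw [hu0, ha0, hv0, hW0, mul_zero, Real.exp_zero, mul_one]
        calc p - (p - ε) = ε := by ring
          _ ≤ ρ * (q' - p) := hερ
      | (m+1), ih =>
        obtain ⟨⟨h0, h1, h2, h3, h4⟩, hWm⟩ := ih m (Nat.lt_succ_self m)
        have hexp : Real.exp (L * W m) ≤ D := by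
          rw [hD_def]
          apply Real.exp_le_exp.mpr
          calc L * W m ≤ L * 4 := mul_le_mul_of_nonneg_left hWm hL0
            _ = 4 * L := by ring
        have ht0 : (0:ℝ) < vv m - aa m := by linarith
        have hlen1 : vv m - aa m ≤ 1 := by
          obtain ⟨e1, e2, e3⟩ := haabb m
          linarith
        have hbm_small : aa m - uu m ≤ κ := by
          calc aa m - uu m ≤ ρ * Real.exp (L * W m) * (vv m - aa m) := h4
            _ ≤ ρ * D * (vv m - aa m) :=
              mul_le_mul_of_nonneg_right (mul_le_mul_of_nonneg_left hexp hρ0.le) ht0.le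
            _ ≤ ρ * D * 1 := mul_le_mul_of_nonneg_left hlen1 (by positivity)
            _ = ρ * D := mul_one _
            _ ≤ min κ 1 := hDρ
            _ ≤ κ := min_le_left _ _
        obtain ⟨R, hRcase, hRlor, hRmono, hRsub, hbbR, hRnhds⟩ :=
          hRfacts m h0 h1 h2 h3 hbm_small
        have huuR : uu m ∈ R := hRsub ⟨le_refl _, by linarith⟩
        have haaR : aa m ∈ R := hRsub ⟨h1.le, h2.le⟩
        have hvvR : vv m ∈ R := hRsub ⟨by linarith, le_refl _⟩
        have huu1 : uu (m+1) = f (uu m) := Function.iterate_succ_apply' f m (p - ε)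
        have haa1 : aa (m+1) = f (aa m) := Function.iterate_succ_apply' f m p
        have hvv1 : vv (m+1) = f (vv m) := Function.iterate_succ_apply' f m q'
        have hbb1 : bb (m+1) = f (bb m) := Function.iterate_succ_apply' f m q
        have h1' : uu (m+1) < aa (m+1) := by rw [huu1, haa1]; exact hRmono huuR haaR h1
        have h2' : aa (m+1) < vv (m+1) := by rw [haa1, hvv1]; exact hRmono haaR hvvR h2
        have h3' : vv (m+1) ≤ bb (m+1) := by
          rw [hvv1, hbb1]
          exact hRmono.monotoneOn hvvR hbbR h3
        have h0' : 0 ≤ uu (m+1) := by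
          rw [huu1]
          exact (hf.maps (hRlor huuR)).1
        have hdiff : ∀ x, uu m < x → x < vv m → HasDerivAt f (deriv f x) x := fun x hx1 hx2 =>
          ((hf.smooth.differentiableOn (by norm_num) x
            (mem_of_mem_nhds (hRnhds x hx1 hx2))).differentiableAt (hRnhds x hx1 hx2)).hasDerivAt
        have hcontR : ContinuousOn f R := hf.smooth.continuousOn.mono hRlor
        obtain ⟨ξ, hξ, hξeq⟩ := exists_hasDerivAt_eq_slope f (deriv f) h1
          (hcontR.mono (fun x hx => hRsub ⟨hx.1, le_trans hx.2 h2.le⟩))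
          (fun x hx => hdiff x hx.1 (lt_trans hx.2 h2))
        obtain ⟨η, hη, hηeq⟩ := exists_hasDerivAt_eq_slope f (deriv f) h2
          (hcontR.mono (fun x hx => hRsub ⟨le_trans h1.le hx.1, hx.2⟩))
          (fun x hx => hdiff x (lt_of_lt_of_le h1 hx.1.le) hx.2)
        have hbval : f (aa m) - f (uu m) = deriv f ξ * (aa m - uu m) := by
          rw [hξeq, div_mul_cancel₀ _ (ne_of_gt (sub_pos.mpr h1))]
        have htval : f (vv m) - f (aa m) = deriv f η * (vv m - aa m) := by
          rw [hηeq, div_mul_cancel₀ _ (ne_of_gt (sub_pos.mpr h2))]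
        have hξR : ξ ∈ R := hRsub ⟨hξ.1.le, by have := hξ.2; linarith⟩
        have hηR : η ∈ R := hRsub ⟨by have := hη.1; linarith, hη.2.le⟩
        have hξn : lorDom c ∈ 𝓝 ξ := hRnhds ξ hξ.1 (by have := hξ.2; linarith)
        have hηn : lorDom c ∈ 𝓝 η := hRnhds η (by have := hη.1; linarith) hη.2
        have hgξ : deriv f ξ = derivWithin f (lorDom c) ξ := (derivWithin_of_mem_nhds hξn).symm
        have hgη : deriv f η = derivWithin f (lorDom c) η := (derivWithin_of_mem_nhds hηn).symm
        have hηpos : 0 < deriv f η := by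
          rw [hgη]
          exact hf.deriv_pos η (mem_of_mem_nhds hηn)
        have hkey2 : deriv f ξ ≤ deriv f η * Real.exp (L * (vv m - uu m)) := by
          have hk := hkey R hRcase ξ hξR η hηR
          rw [← hgξ, ← hgη] at hk
          refine le_trans hk (mul_le_mul_of_nonneg_left ?_ hηpos.le)
          apply Real.exp_le_exp.mpr
          apply mul_le_mul_of_nonneg_left _ hL0
          rw [abs_le]
          obtain ⟨s1, s2⟩ := hξ
          obtain ⟨s3, s4⟩ := hη
          constructor <;> linarith
        have hWsucc : W (m+1) = W m + (vv m - uu m) := Finset.sum_range_succ _ _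
        have hfinal : aa (m+1) - uu (m+1) ≤
            ρ * Real.exp (L * W (m+1)) * (vv (m+1) - aa (m+1)) := by
          rw [huu1, haa1, hvv1, hbval, htval, hWsucc, mul_add, Real.exp_add]
          have e1 : (0:ℝ) ≤ aa m - uu m := by linarith
          calc deriv f ξ * (aa m - uu m)
              ≤ (deriv f η * Real.exp (L * (vv m - uu m))) * (aa m - uu m) :=
                mul_le_mul_of_nonneg_right hkey2 e1
            _ ≤ (deriv f η * Real.exp (L * (vv m - uu m))) *
                (ρ * Real.exp (L * W m) * (vv m - aa m)) :=
                mul_le_mul_of_nonneg_left h4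
                  (mul_nonneg hηpos.le (Real.exp_pos _).le)
            _ = ρ * (Real.exp (L * W m) * Real.exp (L * (vv m - uu m))) *
                (deriv f η * (vv m - aa m)) := by ring
        exact ⟨h0', h1', h2', h3', hfinal⟩
  -- small-gap bound, reusable
  have hsmall : ∀ n, aa n - uu n ≤ κ := by
    intro n
    obtain ⟨⟨h0, h1, h2, h3, h4⟩, hWn⟩ := hP n
    have hexp : Real.exp (L * W n) ≤ D := by
      rw [hD_def]
      apply Real.exp_le_exp.mpr
      calc L * W n ≤ L * 4 := mul_le_mul_of_nonneg_left hWn hL0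
        _ = 4 * L := by ring
    have ht0 : (0:ℝ) < vv n - aa n := by linarith
    have hlen1 : vv n - aa n ≤ 1 := by
      obtain ⟨e1, e2, e3⟩ := haabb n
      linarith
    calc aa n - uu n ≤ ρ * Real.exp (L * W n) * (vv n - aa n) := h4
      _ ≤ ρ * D * (vv n - aa n) :=
        mul_le_mul_of_nonneg_right (mul_le_mul_of_nonneg_left hexp hρ0.le) ht0.le
      _ ≤ ρ * D * 1 := mul_le_mul_of_nonneg_left hlen1 (by positivity)
      _ = ρ * D := mul_one _
      _ ≤ min κ 1 := hDρ
      _ ≤ κ := min_le_left _ _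
  -- goodness of the enlarged interval
  intro x hx
  rcases le_or_gt x p with hxp | hxp
  · have hxI : p - ε ≤ x := hx.1.le
    have hiter : ∀ n, uu n ≤ f^[n] x ∧ f^[n] x ≤ aa n := by
      intro n
      induction n with
      | zero => exact ⟨hxI, hxp⟩
      | succ n ihn =>
        obtain ⟨⟨g0, g1, g2, g3, g4⟩, _⟩ := hP n
        obtain ⟨R, hRcase, hRlor, hRmono, hRsub, hbbR, hRnhds⟩ :=
          hRfacts n g0 g1 g2 g3 (hsmall n)
        have hxR : f^[n] x ∈ R := hRsub ⟨ihn.1, by have := ihn.2; linarith⟩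
        have huuR : uu n ∈ R := hRsub ⟨le_refl _, by linarith⟩
        have haaR : aa n ∈ R := hRsub ⟨g1.le, g2.le⟩
        have hfx : f^[n+1] x = f (f^[n] x) := Function.iterate_succ_apply' f n x
        constructor
        · rw [hfx, show uu (n+1) = f (uu n) from Function.iterate_succ_apply' f n (p - ε)]
          exact hRmono.monotoneOn huuR hxR ihn.1
        · rw [hfx, show aa (n+1) = f (aa n) from Function.iterate_succ_apply' f n p]
          exact hRmono.monotoneOn hxR haaR ihn.2
    intro n
    obtain ⟨⟨g0, g1, g2, g3, g4⟩, _⟩ := hP n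
    obtain ⟨R, hRcase, hRlor, hRmono, hRsub, hbbR, hRnhds⟩ :=
      hRfacts n g0 g1 g2 g3 (hsmall n)
    have hxR : f^[n] x ∈ R := hRsub ⟨(hiter n).1, by have := (hiter n).2; linarith⟩
    exact (hRlor hxR).2
  · exact hTgood x ⟨hxp, hx.2⟩

lemma left_endpoint_pos (hf : IsContractingLorenz f c) {p q : ℝ} (hpq : p < q) (hq : q ≤ c)
    (hTw : IsWanderingInterval f c (Ioo p q)) : 0 < p := by
  have hsub := hTw.2.1
  have hp0 : 0 ≤ p := (Ioo_bounds hpq hsub).1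
  rcases hp0.lt_or_eq with h | h
  · exact h
  exfalso
  have hq0 : 0 < q := by rw [← h] at hpq; exact hpq
  have hqc : Ioo (0:ℝ) q ⊆ Ico 0 c := fun x hx => ⟨hx.1.le, lt_of_lt_of_le hx.2 hq⟩
  have h0dom : (0:ℝ) ∈ lorDom c :=
    ⟨⟨le_refl 0, by linarith [hf.c_mem.2]⟩, ne_of_lt hf.c_mem.1⟩
  have hcw : ContinuousWithinAt f (lorDom c) 0 := hf.smooth.continuousOn 0 h0dom
  have hlim : Tendsto f (𝓝[Ioo (0:ℝ) q] 0) (𝓝 0) := by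
    have h1 := hcw.tendsto
    rw [hf.map0] at h1
    exact h1.mono_left (nhdsWithin_mono 0 (hqc.trans (Ico_subset_lorDom hf.c_mem)))
  have hneb : (𝓝[Ioo (0:ℝ) q] (0:ℝ)).NeBot := by
    apply mem_closure_iff_nhdsWithin_neBot.mp
    rw [closure_Ioo (ne_of_lt hq0)]
    exact ⟨le_refl 0, hq0.le⟩
  have hev : ∀ᶠ x in 𝓝[Ioo (0:ℝ) q] 0, f x < q := hlim (Iio_mem_nhds hq0)
  obtain ⟨x, hxf, hxI⟩ := (hev.and eventually_mem_nhdsWithin).exists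
  have hfx0 : 0 < f x := by
    have h2 := (strictMonoOn_left hf) (show (0:ℝ) ∈ Ico 0 c from ⟨le_refl 0, hf.c_mem.1⟩)
      (hqc hxI) hxI.1
    rwa [hf.map0] at h2
  have hxT : x ∈ Ioo p q := by rw [← h]; exact hxI
  have hfxT : f x ∈ Ioo p q := by rw [← h]; exact ⟨hfx0, hxf⟩
  exact wand_self_disjoint hTw (k := 1) le_rfl (f x) hfxT x hxT (by simp)

lemma right_endpoint_lt_one (hf : IsContractingLorenz f c) {p q : ℝ} (hpq : p < q) (hp : c ≤ p)
    (hTw : IsWanderingInterval f c (Ioo p q)) : q < 1 := by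
  have hsub := hTw.2.1
  have hq1 : q ≤ 1 := (Ioo_bounds hpq hsub).2
  rcases hq1.lt_or_eq with h | h
  · exact h
  exfalso
  subst h
  have hcp : c ≤ p := hp
  have hqc : Ioo p 1 ⊆ Ioc c 1 := fun x hx => ⟨lt_of_le_of_lt hcp hx.1, hx.2.le⟩
  have h1dom : (1:ℝ) ∈ lorDom c :=
    ⟨⟨by linarith [hf.c_mem.1], le_refl 1⟩, ne_of_gt hf.c_mem.2⟩
  have hcw : ContinuousWithinAt f (lorDom c) 1 := hf.smooth.continuousOn 1 h1dom
  have hlim : Tendsto f (𝓝[Ioo p 1] 1) (𝓝 1) := by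
    have h1 := hcw.tendsto
    rw [hf.map1] at h1
    exact h1.mono_left (nhdsWithin_mono 1 (hqc.trans (Ioc_subset_lorDom hf.c_mem)))
  have hneb : (𝓝[Ioo p (1:ℝ)] (1:ℝ)).NeBot := by
    apply mem_closure_iff_nhdsWithin_neBot.mp
    rw [closure_Ioo (ne_of_lt hpq)]
    exact ⟨hpq.le, le_refl 1⟩
  have hev : ∀ᶠ x in 𝓝[Ioo p (1:ℝ)] 1, p < f x := hlim (Ioi_mem_nhds hpq)
  obtain ⟨x, hxf, hxI⟩ := (hev.and eventually_mem_nhdsWithin).exists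
  have hfx1 : f x < 1 := by
    have h2 := (strictMonoOn_right hf) (hqc hxI)
      (show (1:ℝ) ∈ Ioc c 1 from ⟨hf.c_mem.2, le_refl 1⟩) hxI.2
    rwa [hf.map1] at h2
  exact wand_self_disjoint hTw (k := 1) le_rfl (f x) ⟨hxf, hfx1⟩ x hxI (by simp)

end WDense
end Lemmas

/-- Denseness of wandering intervals, when they exist. -/
theorem wandering_intervals_dense
    (f : ℝ → ℝ) (c : ℝ)
    (hf : IsContractingLorenz f c) (hnf : IsNonFlat f c)
    (hpa : HasNoPeriodicAttractor f)
    (hex : ∃ I : Set ℝ, IsWanderingInterval f c I) :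
    OpenDenseIn01 {x | ∃ I : Set ℝ, IsWanderingInterval f c I ∧ x ∈ I} := by
  classical
  have hSW : {x | ∃ I : Set ℝ, IsWanderingInterval f c I ∧ x ∈ I} = WSet f c := rfl
  have hSI : WSet f c ∩ Icc (0:ℝ) 1 = WSet f c := inter_eq_left.mpr WDense.WSet_subset
  constructor
  · exact ⟨WSet f c, WDense.WSet_open, by rw [hSW]⟩
  · rw [hSW, hSI]
    intro x₀ hx₀
    by_contra hx₀c
    rw [Metric.mem_closure_iff] at hx₀c
    push_neg at hx₀c
    obtain ⟨r, hr, hrS⟩ := hx₀c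
    set u := max (x₀ - r) 0 with hu_def
    set v := min (x₀ + r) 1 with hv_def
    obtain ⟨hx₀0, hx₀1⟩ := hx₀
    have huv : u < v := by
      rw [hu_def, hv_def, lt_min_iff, max_lt_iff, max_lt_iff]
      exact ⟨⟨by linarith, by linarith⟩, ⟨by linarith, by linarith⟩⟩
    have hU01 : Ioo u v ⊆ Ioo 0 1 := fun y hy =>
      ⟨lt_of_le_of_lt (le_max_right _ _) hy.1, lt_of_lt_of_le hy.2 (min_le_right _ _)⟩
    have hUS : Ioo u v ∩ WSet f c = ∅ := by
      rw [eq_empty_iff_forall_notMem]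
      rintro y ⟨hy1, hy2⟩
      have hd := hrS y hy2
      rw [Real.dist_eq] at hd
      have l1 := le_max_left (x₀ - r) 0
      have l2 := min_le_left (x₀ + r) 1
      obtain ⟨m1, m2⟩ := hy1
      have habs : |x₀ - y| < r := by
        rw [abs_sub_lt_iff]
        constructor <;> linarith
      linarith
    obtain ⟨t₁, t₂, ht₁, ht₂, ht₁0, ht₂1, htS⟩ := WDense.margin_of_bad hf hpa huv hU01 hUS
    -- the component of a wandering interval
    obtain ⟨I₀, hI₀⟩ := hex
    have hI₀ne : I₀.Nonempty := by
      obtain ⟨a, b, hab, h⟩ := hI₀.1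
      rw [h]
      exact nonempty_Ioo.mpr hab
    obtain ⟨x₁, hx₁⟩ := hI₀ne
    have hx₁S : x₁ ∈ WSet f c := ⟨I₀, hI₀, hx₁⟩
    set T := connectedComponentIn (WSet f c) x₁ with hT_def
    have hTopen : IsOpen T := WDense.WSet_open.connectedComponentIn
    have hTsubS : T ⊆ WSet f c := connectedComponentIn_subset _ _
    have hx₁T : x₁ ∈ T := mem_connectedComponentIn hx₁S
    have hTconn : IsPreconnected T := isPreconnected_connectedComponentIn
    obtain ⟨p, q, hpq, hTIoo⟩ := WDense.eq_Ioo_of_open hTopen hTconn.ordConnected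
      ⟨x₁, hx₁T⟩ (hTsubS.trans WDense.WSet_subset)
    have hIooS : Ioo p q ⊆ WSet f c := hTIoo ▸ hTsubS
    have hTgood : ∀ y ∈ Ioo p q, GoodOrbit f c y :=
      fun y hy => WDense.WSet_good y (hIooS hy)
    have hTw : IsWanderingInterval f c (Ioo p q) :=
      WDense.good_interval_wandering hf hpa hpq (hIooS.trans WDense.WSet_subset) hTgood
    -- margins
    set δ := min (c - t₁) (t₂ - c) with hδ_def
    have hδ0 : 0 < δ := lt_min (by linarith) (by linarith)
    have hδc : δ ≤ c := le_trans (min_le_left _ _) (by linarith)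
    have hδ1 : c + δ ≤ 1 := by
      have := min_le_right (c - t₁) (t₂ - c)
      linarith
    have hmarg : ∀ n : ℕ, (f^[n] '' Ioo p q) ∩ Ioo (c - δ) (c + δ) = ∅ := by
      intro n
      have hsubS : f^[n] '' Ioo p q ⊆ WSet f c :=
        WDense.subset_WSet (WDense.pushforward hf hTw n)
      rw [eq_empty_iff_forall_notMem]
      rintro y ⟨hy1, hy2⟩
      have hyT : y ∈ Ioo t₁ t₂ := by
        have e1 := min_le_left (c - t₁) (t₂ - c)
        have e2 := min_le_right (c - t₁) (t₂ - c)
        obtain ⟨m1, m2⟩ := hy2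
        exact ⟨by linarith, by linarith⟩
      have : y ∈ Ioo t₁ t₂ ∩ WSet f c := ⟨hyT, hsubS hy1⟩
      rw [htS] at this
      exact this
    -- side of the component, and positivity of the left endpoint
    have hcT : c ∉ Ioo p q := fun hc' => (hTgood c hc') 0 (by simp)
    have hside : q ≤ c ∨ c ≤ p := by
      by_contra hcon
      push_neg at hcon
      exact hcT ⟨hcon.2, hcon.1⟩
    have hp0 : 0 < p := by
      rcases hside with h | h
      · exact WDense.left_endpoint_pos hf hpq h hTw
      · exact lt_of_lt_of_le hf.c_mem.1 h
    -- Schwartz enlargement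
    obtain ⟨ε, hε0, hεp, hgood⟩ := WDense.schwartz_enlarge hf hpq hδ0 hδc hδ1 hp0 hTw hmarg
    have hq1 : q ≤ 1 := (WDense.Ioo_bounds hpq hTw.2.1).2
    have hJsub : Ioo (p - ε) q ⊆ Icc 0 1 := fun y hy =>
      ⟨by have := hy.1; linarith, by have := hy.2; linarith⟩
    have hJw : IsWanderingInterval f c (Ioo (p - ε) q) :=
      WDense.good_interval_wandering hf hpa (by linarith) hJsub hgood
    have hJS : Ioo (p - ε) q ⊆ WSet f c := WDense.subset_WSet hJw
    have hJT : Ioo (p - ε) q ⊆ T := by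
      apply IsPreconnected.subset_connectedComponentIn isPreconnected_Ioo _ hJS
      have : x₁ ∈ Ioo p q := hTIoo ▸ hx₁T
      exact ⟨by have := this.1; linarith, this.2⟩
    have hpT : p ∈ T := hJT ⟨by linarith, hpq⟩
    rw [hTIoo] at hpT
    exact lt_irrefl p hpT.1
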